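/- arXiv:1203.6432 — 2 statements merged into one kernel-verified Lean document; each statement's English description precedes it below -/
import Mathlib

section
/- Let Λ ∈ P_S(Σ̄) with h_S(Λ) < ∞. Then h_S(Λ) + ∫ u dΛ ≤ 0, and equality holds if and only if Λ ∈ E(M). -/
open MeasureTheory Filter Topology
open scoped ENNReal NNReal Classical

noncomputable section

/-- A countable Markov system `(K_{i(e)}, w_e, p_e)_{e ∈ E}` on a metric space `K`:
a partition `(K_j)_{j ∈ N}` of `K` into nonempty Borel sets, source and target maps
`i, t : E → N` (`i` surjective), and for each `e ∈ E` Borel maps `w_e` and probability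
functions `p_e` (extended by zero outside `K_{i(e)}`) with
`∑_{e, i(e)=j} p_e(y) = 1` for `y ∈ K_j`. -/
structure MarkovSystem (K : Type*) [MetricSpace K] [MeasurableSpace K]
    (N : Type*) (E : Type*) where
  Kset : N → Set K
  Kset_nonempty : ∀ j, (Kset j).Nonempty
  Kset_measurable : ∀ j, MeasurableSet (Kset j)
  Kset_disjoint : Pairwise (Function.onFun Disjoint Kset)
  Kset_cover : (⋃ j, Kset j) = Set.univ
  i : E → N
  t : E → N
  i_surj : Function.Surjective i
  w : E → K → K
  p : E → K → ℝ
  w_measurable : ∀ e, Measurable (w e)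
  p_measurable : ∀ e, Measurable (p e)
  p_nonneg : ∀ e x, 0 ≤ p e x
  p_le_one : ∀ e x, p e x ≤ 1
  p_zero_outside : ∀ e x, x ∉ Kset (i e) → p e x = 0
  w_mapsTo : ∀ e, Set.MapsTo (w e) (Kset (i e)) (Kset (t e))
  p_pos_somewhere : ∀ e, ∃ x ∈ Kset (i e), 0 < p e x
  p_tsum_one : ∀ j, ∀ x ∈ Kset j, (∑' e : {e : E // i e = j}, p e.val x) = 1

/-- `Ē = E ∪ {∞}` (one-point compactification); with `E` countable its Borel σ-algebra
consists of all subsets. -/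
instance optionMeasurableSpace (E : Type*) : MeasurableSpace (Option E) := ⊤

/-- The code space `Σ̄ = Ē^ℤ`, carrying the product σ-algebra. -/
abbrev CodeSpace (E : Type*) : Type _ := ℤ → Option E

/-- The left shift `S` on the code space, `(Sσ)_{k-1} = σ_k`. -/
def shiftMap (E : Type*) : CodeSpace E → CodeSpace E := fun σ k => σ (k + 1)

/-- The cylinder set `_m[es₀, …, es_{n}] = {σ : σ_{m+k} = es_k}`. -/
def cylSetL {E : Type*} (m : ℤ) (es : List (Option E)) : Set (CodeSpace E) :=
  {σ | ∀ (k : ℕ) (h : k < es.length), σ (m + (k : ℤ)) = es.get ⟨k, h⟩}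

/-- The σ-algebra `𝓕` generated by the cylinder sets `_m[e_m, …, e_0]`, `m ≤ 0`. -/
def pastAlgebra (E : Type*) : MeasurableSpace (CodeSpace E) :=
  MeasurableSpace.generateFrom
    {A | ∃ es : List (Option E), es ≠ [] ∧ A = cylSetL (1 - (es.length : ℤ)) es}

/-- The conditional entropy `h_S(Λ) = H_Λ((_1[e])_{e ∈ Ē} | 𝓕)`. -/
def entropyS {E : Type*} (Λ : Measure (CodeSpace E)) : ℝ≥0∞ :=
  ∑' eo : Option E,
    ∫⁻ σ, ENNReal.ofReal
        (Real.negMulLog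
          ((Λ[Set.indicator {τ : CodeSpace E | τ 1 = eo} (fun _ => (1 : ℝ)) | pastAlgebra E]) σ)) ∂Λ

namespace MarkovSystem

variable {K : Type*} [MetricSpace K] [MeasurableSpace K] {N E : Type*}

/-- The Markov operator `Uf = ∑_e p_e · (f ∘ w_e)` acting on nonnegative Borel functions. -/
def markovOp (M : MarkovSystem K N E) (f : K → ℝ≥0∞) : K → ℝ≥0∞ :=
  fun x => ∑' e : E, ENNReal.ofReal (M.p e x) * f (M.w e x)

/-- The adjoint operator `U*` acting on measures, `(U*ν)(B) = ∫ U(1_B) dν`. -/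
def adjOp (M : MarkovSystem K N E) (ν : Measure K) : Measure K :=
  Measure.sum fun e : E =>
    Measure.map (M.w e) (ν.withDensity fun x => ENNReal.ofReal (M.p e x))

/-- `μ ∈ P(M)`: `μ` is an invariant Borel probability measure, `U*μ = μ`. -/
def IsInvariantMeasure (M : MarkovSystem K N E) (μ : Measure K) : Prop :=
  IsProbabilityMeasure μ ∧ M.adjOp μ = μ

/-- The path space `Σ_G`: all coordinates lie in `E` and `i(σ_{n+1}) = t(σ_n)`. -/
def pathSpace (M : MarkovSystem K N E) : Set (CodeSpace E) :=
  {σ | ∀ n : ℤ, ∃ e e' : E, σ n = some e ∧ σ (n + 1) = some e' ∧ M.i e' = M.t e}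

/-- `T_j = {σ ∈ Σ_G : t(σ_0) = j}`. -/
def Tset (M : MarkovSystem K N E) (j : N) : Set (CodeSpace E) :=
  {σ | σ ∈ M.pathSpace ∧ ∃ e : E, σ 0 = some e ∧ M.t e = j}

/-- `w` extended to `Ē`, with `w_∞ = id`. -/
def wext (M : MarkovSystem K N E) : Option E → K → K := fun o => o.elim id M.w

/-- `p` extended to `Ē`, with `p_∞ = 0`. -/
def pext (M : MarkovSystem K N E) : Option E → K → ℝ := fun o => o.elim (fun _ => 0) M.p

/-- `i` extended to `Ē`, with `i(∞) = j₀`. -/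
def iext (M : MarkovSystem K N E) (j0 : N) : Option E → N := fun o => o.elim j0 M.i

/-- `t` extended to `Ē`, with `t(∞) = j₀`. -/
def text (M : MarkovSystem K N E) (j0 : N) : Option E → N := fun o => o.elim j0 M.t

/-- `iterW M σ n y = w_{σ_0} ∘ w_{σ_{-1}} ∘ ⋯ ∘ w_{σ_{-n}} (y)`. -/
def iterW (M : MarkovSystem K N E) (σ : CodeSpace E) : ℕ → K → K
  | 0, y => M.wext (σ 0) y
  | n + 1, y => M.iterW σ n (M.wext (σ (-(n + 1 : ℤ))) y)

/-- `orbit M j0 xp σ n = w_{σ_0} ∘ ⋯ ∘ w_{σ_{-n}} (x_{i(σ_{-n})})`. -/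
def orbit (M : MarkovSystem K N E) (j0 : N) (xp : N → K) (σ : CodeSpace E) (n : ℕ) : K :=
  M.iterW σ n (xp (M.iext j0 (σ (-(n : ℤ)))))

/-- `D`: the set of `σ ∈ Σ_G` for which `lim_{m → -∞} w_{σ_0} ∘ ⋯ ∘ w_{σ_m}(x_{i(σ_m)})` exists. -/
def codeDomain (M : MarkovSystem K N E) (j0 : N) (xp : N → K) : Set (CodeSpace E) :=
  {σ | σ ∈ M.pathSpace ∧ ∃ l : K, Tendsto (fun n : ℕ => M.orbit j0 xp σ n) atTop (𝓝 l)}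

/-- The coding map `F`: the above limit on `D`, and `x_{t(σ_0)}` elsewhere. -/
def code (M : MarkovSystem K N E) (j0 : N) (xp : N → K) (σ : CodeSpace E) : K :=
  if h : σ ∈ M.codeDomain j0 xp then h.2.choose else xp (M.text j0 (σ 0))

/-- `Λ ∈ E(M)`: `Λ` is a shift-invariant Borel probability measure with `Λ(D) = 1` and
`E_Λ(1_{_1[e]} | 𝓕) = p_e ∘ F` `Λ`-a.e. for every `e ∈ E` (an equilibrium state). -/
def IsEquilibrium (M : MarkovSystem K N E) (j0 : N) (xp : N → K)
    (Λ : Measure (CodeSpace E)) : Prop :=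
  IsProbabilityMeasure Λ ∧ Measure.map (shiftMap E) Λ = Λ ∧
    Λ (M.codeDomain j0 xp) = 1 ∧
    ∀ e : E,
      (Λ[Set.indicator {σ : CodeSpace E | σ 1 = some e} (fun _ => (1 : ℝ)) | pastAlgebra E])
        =ᵐ[Λ] fun σ => M.p e (M.code j0 xp σ)

/-- `pbar` is the family of continuous extensions `p̄_e` of `p_e|_{K_{i(e)}}` to the closure
of `K_{i(e)}`, extended further by zero on `K`. -/
def IsUCExtensionP (M : MarkovSystem K N E) (pbar : E → K → ℝ) : Prop :=
  ∀ e : E, ContinuousOn (pbar e) (closure (M.Kset (M.i e))) ∧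
    (∀ x ∈ M.Kset (M.i e), pbar e x = M.p e x) ∧
    (∀ x, x ∉ closure (M.Kset (M.i e)) → pbar e x = 0)

/-- `wb` is a family of continuous extensions `w̄_e` of `w_e|_{K_{i(e)}}` to the closure
of `K_{i(e)}`. -/
def IsUCExtensionW (M : MarkovSystem K N E) (wb : E → K → K) : Prop :=
  ∀ e : E, ContinuousOn (wb e) (closure (M.Kset (M.i e))) ∧
    (∀ x ∈ M.Kset (M.i e), wb e x = M.w e x)

/-- The Markov system is uniformly continuous: each `w_e|_{K_{i(e)}}` and `p_e|_{K_{i(e)}}`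
is uniformly continuous. -/
def IsUniformlyContinuous (M : MarkovSystem K N E) : Prop :=
  ∀ e : E, UniformContinuousOn (M.w e) (M.Kset (M.i e)) ∧
    UniformContinuousOn (M.p e) (M.Kset (M.i e))

/-- `∂p_e = p̄_e · 1_{cl(K_{i(e)}) \ K_{i(e)}}`. -/
def dp (M : MarkovSystem K N E) (pbar : E → K → ℝ) (e : E) : K → ℝ :=
  Set.indicator (closure (M.Kset (M.i e)) \ M.Kset (M.i e)) (pbar e)

/-- `Λ ∈ Ẽ(M)` (asymptotic state): shift-invariant probability with `Λ(D) = 1` and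
`E_Λ(1_{_1[e]} | 𝓕) = (p̄_e ∘ F)·1_{T_{i(e)}}` `Λ`-a.e. for every `e`. -/
def IsAsymptotic (M : MarkovSystem K N E) (j0 : N) (xp : N → K) (pbar : E → K → ℝ)
    (Λ : Measure (CodeSpace E)) : Prop :=
  IsProbabilityMeasure Λ ∧ Measure.map (shiftMap E) Λ = Λ ∧
    Λ (M.codeDomain j0 xp) = 1 ∧
    ∀ e : E,
      (Λ[Set.indicator {σ : CodeSpace E | σ 1 = some e} (fun _ => (1 : ℝ)) | pastAlgebra E])
        =ᵐ[Λ] Set.indicator (M.Tset (M.i e)) (fun σ => pbar e (M.code j0 xp σ))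

/-- `Λ ∈ E_⊥(M)`: shift-invariant probability with `Λ(D) = 1` and
`E_Λ(1_{_1[e]} | 𝓕) = (∂p_e ∘ F)·1_{T_{i(e)}}` `Λ`-a.e. for every `e`. -/
def IsPerp (M : MarkovSystem K N E) (j0 : N) (xp : N → K) (pbar : E → K → ℝ)
    (Λ : Measure (CodeSpace E)) : Prop :=
  IsProbabilityMeasure Λ ∧ Measure.map (shiftMap E) Λ = Λ ∧
    Λ (M.codeDomain j0 xp) = 1 ∧
    ∀ e : E,
      (Λ[Set.indicator {σ : CodeSpace E | σ 1 = some e} (fun _ => (1 : ℝ)) | pastAlgebra E])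
        =ᵐ[Λ] Set.indicator (M.Tset (M.i e)) (fun σ => M.dp pbar e (M.code j0 xp σ))

/-- `G = ⋃_{k ≥ 0} ⋃_{j ∈ N} S^{-k}(F^{-1}(K_j) ∩ T_j)`. -/
def Gset (M : MarkovSystem K N E) (j0 : N) (xp : N → K) : Set (CodeSpace E) :=
  ⋃ (k : ℕ) (j : N), (shiftMap E)^[k] ⁻¹' ((M.code j0 xp) ⁻¹' (M.Kset j) ∩ M.Tset j)

/-- `M` is non-degenerate: for every asymptotic state `Λ` there is `i ∈ N` with
`Λ(T_i ∩ F^{-1}(K_i)) > 0`. -/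
def IsNonDegenerate (M : MarkovSystem K N E) (j0 : N) (xp : N → K) (pbar : E → K → ℝ) : Prop :=
  ∀ Λ : Measure (CodeSpace E), M.IsAsymptotic j0 xp pbar Λ →
    ∃ i : N, 0 < Λ (M.Tset i ∩ (M.code j0 xp) ⁻¹' (M.Kset i))

/-- `M` is consistent: `F(Λ) ∈ P(M)` for every asymptotic state `Λ`. -/
def IsConsistent (M : MarkovSystem K N E) (j0 : N) (xp : N → K) (pbar : E → K → ℝ) : Prop :=
  ∀ Λ : Measure (CodeSpace E), M.IsAsymptotic j0 xp pbar Λ →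
    M.IsInvariantMeasure (Measure.map (M.code j0 xp) Λ)

/-- `Rf = ∑_e ∂p_e · (f ∘ w̄_e)`. -/
def Rop (M : MarkovSystem K N E) (pbar : E → K → ℝ) (wb : E → K → K)
    (f : K → ℝ≥0∞) : K → ℝ≥0∞ :=
  fun x => ∑' e : E, ENNReal.ofReal (M.dp pbar e x) * f (wb e x)

/-- `Ω = ⋂_{n ≥ 1} {R^n 1 ≥ 1}`. -/
def OmegaSet (M : MarkovSystem K N E) (pbar : E → K → ℝ) (wb : E → K → K) : Set K :=
  ⋂ n : ℕ, {x : K | 1 ≤ (M.Rop pbar wb)^[n + 1] (fun _ => 1) x}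

/-- `ξ_j = ∑_{e, i(e) = j} sup_{x ∈ K_j} p_e(x)`. -/
def xi (M : MarkovSystem K N E) (j : N) : ℝ≥0∞ :=
  ∑' e : {e : E // M.i e = j}, ⨆ x ∈ M.Kset j, ENNReal.ofReal (M.p e.val x)

/-- `M` has a dominating Markov chain: `ξ_j < ∞` for all `j ∈ N`. -/
def HasDominatingChain (M : MarkovSystem K N E) : Prop := ∀ j : N, M.xi j ≠ ⊤

/-- `ξ_j · q_{j j'} = ∑_{e, i(e) = j, t(e) = j'} sup_{x ∈ K_j} p_e(x)`. -/
def xiq (M : MarkovSystem K N E) (j j' : N) : ℝ≥0∞ :=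
  ∑' e : {e : E // M.i e = j ∧ M.t e = j'}, ⨆ x ∈ M.Kset j, ENNReal.ofReal (M.p e.val x)

/-- `c = ∑_{j'} sup_j ξ_j q_{j j'}`. -/
def cConst (M : MarkovSystem K N E) : ℝ≥0∞ := ∑' j' : N, ⨆ j : N, M.xiq j j'

/-- `α^{x_0}_n({j}) = (1/n) ∑_{k=1}^n ((U*)^k δ_{x_0})(K_j)`. -/
def alphaMeas (M : MarkovSystem K N E) (x0 : K) (n : ℕ) (j : N) : ℝ≥0∞ :=
  (n : ℝ≥0∞)⁻¹ * ∑ k ∈ Finset.range n, (M.adjOp^[k + 1] (Measure.dirac x0)) (M.Kset j)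

/-- Condition (T) at `x_0`: the sequence `(α^{x_0}_n)_n` is uniformly tight. -/
def ConditionT (M : MarkovSystem K N E) (x0 : K) : Prop :=
  ∀ ε : ℝ, 0 < ε → ∃ V : Finset N,
    ∀ n : ℕ, (∑' j : {j : N // j ∉ V}, M.alphaMeas x0 (n + 1) j.val) < ENNReal.ofReal ε

/-- `M` is contractive with contraction rate `a`:
`∑_{e, i(e) = j} p_e(x) d(w_e x, w_e y) ≤ a·d(x, y)` on each `K_j`. -/
def IsContractive (M : MarkovSystem K N E) (a : ℝ) : Prop :=
  ∀ j : N, ∀ x ∈ M.Kset j, ∀ y ∈ M.Kset j,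
    (∑' e : {e : E // M.i e = j},
        ENNReal.ofReal (M.p e.val x * dist (M.w e.val x) (M.w e.val y)))
      ≤ ENNReal.ofReal (a * dist x y)

/-- `L(x) = ∑_j d(x, x_j)·1_{K_j}(x)`. -/
def Lfun (M : MarkovSystem K N E) (xp : N → K) : K → ℝ≥0∞ :=
  fun x => ∑' j : N, Set.indicator (M.Kset j) (fun y => ENNReal.ofReal (dist y (xp j))) x

/-- `b = sup_j sup_{x ∈ K_j} ∑_{e, i(e) = j} p_e(x)·d(w_e(x_{i(e)}), x_{t(e)})`. -/
def bConst (M : MarkovSystem K N E) (xp : N → K) : ℝ≥0∞ :=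
  ⨆ j : N, ⨆ x ∈ M.Kset j,
    ∑' e : {e : E // M.i e = j},
      ENNReal.ofReal (M.p e.val x * dist (M.w e.val (xp (M.i e.val))) (xp (M.t e.val)))

/-- `P^m_x` evaluated on a word: `p_{e_0}(x)·p_{e_1}(w_{e_0}x)·⋯`. -/
def wordProb (M : MarkovSystem K N E) : List (Option E) → K → ℝ
  | [], _ => 1
  | o :: rest, x => M.pext o x * M.wordProb rest (M.wext o x)

/-- `Λ = Φ(μ)`: `Λ` is a shift-invariant Borel probability measure with
`Λ(_m[e_m, …, e_n]) = ∫ P^m_x(_m[e_m, …, e_n]) dμ(x)` for all cylinders with `m ≤ 0`. -/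
def IsPhiOf (M : MarkovSystem K N E) (μ : Measure K) (Λ : Measure (CodeSpace E)) : Prop :=
  IsProbabilityMeasure Λ ∧ Measure.map (shiftMap E) Λ = Λ ∧
    ∀ m : ℤ, m ≤ 0 → ∀ es : List (Option E),
      Λ (cylSetL m es) = ∫⁻ x, ENNReal.ofReal (M.wordProb es x) ∂μ

/-- The (negative of the) energy function: `-u(σ) = -log p_{σ_1}(F(σ))` on `D`
(`+∞` if `p_{σ_1}(F(σ)) = 0`) and `+∞` off `D`, valued in `[0, ∞]`. -/
def negEnergy (M : MarkovSystem K N E) (j0 : N) (xp : N → K) (σ : CodeSpace E) : ℝ≥0∞ :=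
  if σ ∈ M.codeDomain j0 xp then
    (σ 1).elim ⊤ fun e =>
      if M.p e (M.code j0 xp σ) = 0 then ⊤
      else ENNReal.ofReal (-Real.log (M.p e (M.code j0 xp σ)))
  else ⊤

/-- The free energy `h_S(Λ) + ∫ u dΛ`, as an extended real number. -/
def freeEnergy (M : MarkovSystem K N E) (j0 : N) (xp : N → K)
    (Λ : Measure (CodeSpace E)) : EReal :=
  (entropyS Λ : EReal) - ((∫⁻ σ, M.negEnergy j0 xp σ ∂Λ : ℝ≥0∞) : EReal)

/-- `Λ₀ ∈ E(u)`: `Λ₀` is a thermodynamic equilibrium state for the energy function `u`. -/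
def IsEquilibriumForU (M : MarkovSystem K N E) (j0 : N) (xp : N → K)
    (Λ0 : Measure (CodeSpace E)) : Prop :=
  IsProbabilityMeasure Λ0 ∧ Measure.map (shiftMap E) Λ0 = Λ0 ∧ entropyS Λ0 ≠ ⊤ ∧
    M.freeEnergy j0 xp Λ0 =
      sSup {r : EReal | ∃ Λ : Measure (CodeSpace E),
        IsProbabilityMeasure Λ ∧ Measure.map (shiftMap E) Λ = Λ ∧ entropyS Λ ≠ ⊤ ∧
          r = M.freeEnergy j0 xp Λ}

end MarkovSystem

end


/- ===================== Auxiliary lemmas ===================== -/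

section Aux0

variable {E : Type*} [Countable E]

instance : MeasurableSingletonClass (Option E) := ⟨fun _ => trivial⟩

lemma measurableSet_cylSetL (m : ℤ) (es : List (Option E)) :
    MeasurableSet (cylSetL m es) := by
  have : cylSetL m es =
      ⋂ (k : ℕ) (h : k < es.length), (fun σ : CodeSpace E => σ (m + k)) ⁻¹' {es.get ⟨k, h⟩} := by
    ext σ; simp [cylSetL, Set.mem_iInter]
  rw [this]
  exact MeasurableSet.iInter fun k => MeasurableSet.iInter fun h =>
    (measurable_pi_apply _) (measurableSet_singleton _)

lemma pastAlgebra_le : pastAlgebra E ≤ (by infer_instance : MeasurableSpace (CodeSpace E)) := by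
  refine MeasurableSpace.generateFrom_le ?_
  rintro A ⟨es, -, rfl⟩
  exact measurableSet_cylSetL _ _

/-- The generating cylinders form a π-system. -/
lemma isPiSystem_pastGen :
    IsPiSystem {A : Set (CodeSpace E) |
      ∃ es : List (Option E), es ≠ [] ∧ A = cylSetL (1 - (es.length : ℤ)) es} := by
  rintro A ⟨es, hes, rfl⟩ B ⟨es', hes', rfl⟩ hne
  -- wlog es.length ≤ es'.length
  have key : ∀ (l l' : List (Option E)), l ≠ [] → l' ≠ [] → l.length ≤ l'.length →
      (cylSetL (1 - (l.length : ℤ)) l ∩ cylSetL (1 - (l'.length : ℤ)) l').Nonempty →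
      cylSetL (1 - (l.length : ℤ)) l ∩ cylSetL (1 - (l'.length : ℤ)) l'
        = cylSetL (1 - (l'.length : ℤ)) l' := by
    intro l l' hl hl' hlen ⟨τ, hτl, hτl'⟩
    apply Set.inter_eq_self_of_subset_right
    intro σ hσ
    intro k hk
    -- position m + k with m = 1 - l.length equals position m' + k' with k' = k + (l'.length - l.length)
    have hk' : k + (l'.length - l.length) < l'.length := by omega
    have hpos : (1 - (l.length : ℤ)) + (k : ℤ)
        = (1 - (l'.length : ℤ)) + ((k + (l'.length - l.length) : ℕ) : ℤ) := by
      push_cast; omega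
    have h1 := hτl k hk
    have h2 := hτl' (k + (l'.length - l.length)) hk'
    have h3 := hσ (k + (l'.length - l.length)) hk'
    rw [hpos]
    rw [h3, ← h2, ← hpos, h1]
  rcases le_total es.length es'.length with h | h
  · rw [key es es' hes hes' h hne]; exact ⟨es', hes', rfl⟩
  · rw [Set.inter_comm] at hne ⊢
    rw [key es' es hes' hes h hne]; exact ⟨es, hes, rfl⟩

/-- Coordinates `σ_j`, `j ≤ 0`, are measurable w.r.t. the past σ-algebra. -/
lemma measurableSet_coord_past {j : ℤ} (hj : j ≤ 0) (eo : Option E) :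
    MeasurableSet[pastAlgebra E] {σ : CodeSpace E | σ j = eo} := by
  classical
  have htn : ((-j).toNat : ℤ) = -j := Int.toNat_of_nonneg (by omega)
  have : {σ : CodeSpace E | σ j = eo} =
      ⋃ (es : {l : List (Option E) // l.length = (-j).toNat}),
        cylSetL (1 - ((eo :: es.1).length : ℤ)) (eo :: es.1) := by
    ext σ
    simp only [Set.mem_iUnion, Set.mem_setOf_eq]
    constructor
    · intro hσ
      refine ⟨⟨List.ofFn (fun k : Fin (-j).toNat => σ (j + 1 + k)), by simp⟩, ?_⟩
      intro k hk
      have hlen : (((eo :: List.ofFn fun k : Fin (-j).toNat => σ (j + 1 + k)).length : ℤ)) =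
          1 + (-j) := by rw [List.length_cons, List.length_ofFn]; push_cast [htn]; ring
      match k with
      | 0 =>
        have harg : (1 : ℤ) - (1 + -j) + ((0 : ℕ) : ℤ) = j := by push_cast; ring
        rw [hlen, harg]
        exact hσ
      | (k' + 1) =>
        have harg : (1 : ℤ) - (1 + -j) + ((k' + 1 : ℕ) : ℤ) = j + 1 + k' := by push_cast; ring
        rw [hlen, harg]
        simp [List.get_ofFn]
    · rintro ⟨es, hes⟩
      have h0 := hes 0 (by simp)
      have hlen : (((eo :: es.1).length : ℤ)) = 1 + (-j) := by
        rw [List.length_cons, es.2]; push_cast [htn]; ring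
      have harg : (1 : ℤ) - (1 + -j) + ((0 : ℕ) : ℤ) = j := by push_cast; ring
      rw [hlen, harg] at h0
      exact h0
  rw [this]
  exact MeasurableSet.iUnion fun es =>
    MeasurableSpace.measurableSet_generateFrom ⟨eo :: es.1, by simp, rfl⟩

lemma measurable_coord_past {j : ℤ} (hj : j ≤ 0) :
    Measurable[pastAlgebra E] (fun σ : CodeSpace E => σ j) :=
  @measurable_to_countable (Option E) _ _ _ (pastAlgebra E) _
    (fun σ => measurableSet_coord_past hj (σ j))

/-- Case analysis on a countably-valued measurable function. -/
lemma measurable_cases {Ω β γ : Type*} [MeasurableSpace Ω] [MeasurableSpace γ] [Countable β]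
    (c : Ω → β) (hc : ∀ b, MeasurableSet (c ⁻¹' {b}))
    (f : β → Ω → γ) (hf : ∀ b, Measurable (f b)) :
    Measurable (fun ω => f (c ω) ω) := by
  intro s hs
  have : (fun ω => f (c ω) ω) ⁻¹' s = ⋃ b, c ⁻¹' {b} ∩ (f b) ⁻¹' s := by
    ext ω; simp only [Set.mem_preimage, Set.mem_iUnion, Set.mem_inter_iff, Set.mem_singleton_iff]
    constructor
    · intro h; exact ⟨c ω, rfl, h⟩
    · rintro ⟨b, rfl, h⟩; exact h
  rw [this]
  exact MeasurableSet.iUnion fun b => (hc b).inter (hf b hs)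

end Aux0


section Aux1

variable {K : Type*} [MetricSpace K] [MeasurableSpace K] [BorelSpace K]
  {N E : Type*} [Countable E]

instance instMSCPiFinOption (m : ℕ) : MeasurableSingletonClass (Fin m → Option E) := by
  refine ⟨fun f => ?_⟩
  have : {f} = ⋂ k : Fin m, (fun g : Fin m → Option E => g k) ⁻¹' {f k} := by
    ext g
    simp only [Set.mem_singleton_iff, Set.mem_iInter, Set.mem_preimage]
    exact ⟨fun h k => by rw [h], fun h => funext h⟩
  rw [this]
  exact MeasurableSet.iInter fun k => (measurable_pi_apply k) (measurableSet_singleton _)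

/-- Extension of a finite word to `ℕ → Option E` by `none`. -/
def extOE (m : ℕ) (f : Fin m → Option E) : ℕ → Option E :=
  fun k => if h : k < m then f ⟨k, h⟩ else none

/-- `iterW` reindexed over `ℕ → Option E`. -/
def iterWN (M : MarkovSystem K N E) : ℕ → (ℕ → Option E) → K → K
  | 0, f, y => M.wext (f 0) y
  | n + 1, f, y => iterWN M n f (M.wext (f (n + 1)) y)

lemma iterWN_congr (M : MarkovSystem K N E) : ∀ (n : ℕ) {f f' : ℕ → Option E},
    (∀ k ≤ n, f k = f' k) → ∀ y, iterWN M n f y = iterWN M n f' y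
  | 0, f, f', h, y => by simp [iterWN, h 0 le_rfl]
  | n + 1, f, f', h, y => by
      simp only [iterWN]
      rw [h (n + 1) le_rfl]
      exact iterWN_congr M n (fun k hk => h k (hk.trans (Nat.le_succ n))) _

lemma iterW_eq_iterWN (M : MarkovSystem K N E) (σ : CodeSpace E) :
    ∀ (n : ℕ) (y : K), M.iterW σ n y = iterWN M n (fun k => σ (-(k : ℤ))) y
  | 0, y => by simp [MarkovSystem.iterW, iterWN]
  | n + 1, y => by
      simp only [MarkovSystem.iterW, iterWN]
      have hc : (-(n + 1 : ℤ)) = -((n + 1 : ℕ) : ℤ) := by push_cast; ring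
      rw [hc, iterW_eq_iterWN M σ n]

/-- The orbit as a function of the word `(σ_0, σ_{-1}, …, σ_{-(m-1)})`. -/
def orbF (M : MarkovSystem K N E) (j0 : N) (xp : N → K) (m : ℕ)
    (f : Fin m → Option E) (n : ℕ) : K :=
  iterWN M n (extOE m f) (xp (M.iext j0 (extOE m f n)))

lemma orbit_eq_orbF (M : MarkovSystem K N E) (j0 : N) (xp : N → K) (σ : CodeSpace E)
    {n m : ℕ} (h : n < m) :
    M.orbit j0 xp σ n = orbF M j0 xp m (fun k => σ (-(k : ℤ))) n := by
  have hagree : ∀ k ≤ n, extOE m (fun k : Fin m => σ (-(k : ℤ))) k = σ (-(k : ℤ)) := by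
    intro k hk
    simp [extOE, dif_pos (lt_of_le_of_lt hk h)]
  unfold MarkovSystem.orbit orbF
  rw [iterW_eq_iterWN, hagree n le_rfl]
  exact iterWN_congr M n (fun k hk => (hagree k hk).symm) _

lemma measurable_restrFin (m : ℕ) :
    Measurable[pastAlgebra E] (fun σ : CodeSpace E => (fun k : Fin m => σ (-(k : ℤ)))) :=
  @measurable_pi_lambda _ _ _ (pastAlgebra E) _ _ fun k => measurable_coord_past (by omega)

lemma measurable_factor (m : ℕ) {γ : Type*} [MeasurableSpace γ]
    (Φ : (Fin m → Option E) → γ) :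
    Measurable[pastAlgebra E] (fun σ : CodeSpace E => Φ (fun k => σ (-(k : ℤ)))) :=
  Measurable.comp (measurable_of_countable Φ) (measurable_restrFin m)

lemma measurable_orbit_past (M : MarkovSystem K N E) (j0 : N) (xp : N → K) (n : ℕ) :
    Measurable[pastAlgebra E] (fun σ => M.orbit j0 xp σ n) := by
  have : (fun σ => M.orbit j0 xp σ n)
      = fun σ : CodeSpace E => orbF M j0 xp (n + 1) (fun k => σ (-(k : ℤ))) n := by
    funext σ; exact orbit_eq_orbF M j0 xp σ (Nat.lt_succ_self n)
  rw [this]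
  exact measurable_factor (n + 1) (fun f => orbF M j0 xp (n + 1) f n)

lemma measurable_orbit_dist (M : MarkovSystem K N E) (j0 : N) (xp : N → K) (n n' : ℕ) :
    Measurable[pastAlgebra E]
      (fun σ => dist (M.orbit j0 xp σ n) (M.orbit j0 xp σ n')) := by
  set m := max n n' + 1 with hm
  have : (fun σ => dist (M.orbit j0 xp σ n) (M.orbit j0 xp σ n'))
      = fun σ : CodeSpace E =>
        (fun f : Fin m → Option E => dist (orbF M j0 xp m f n) (orbF M j0 xp m f n'))
          (fun k => σ (-(k : ℤ))) := by
    funext σ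
    dsimp only
    rw [← orbit_eq_orbF M j0 xp σ (show n < m by omega),
      ← orbit_eq_orbF M j0 xp σ (show n' < m by omega)]
  rw [this]
  exact measurable_factor m (fun f => dist (orbF M j0 xp m f n) (orbF M j0 xp m f n'))

/-- The set of codes whose orbit converges. -/
def convSet (M : MarkovSystem K N E) (j0 : N) (xp : N → K) : Set (CodeSpace E) :=
  {σ | ∃ l, Tendsto (fun n : ℕ => M.orbit j0 xp σ n) atTop (𝓝 l)}

lemma measurableSet_convSet [CompleteSpace K] (M : MarkovSystem K N E) (j0 : N) (xp : N → K) :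
    MeasurableSet[pastAlgebra E] (convSet M j0 xp) := by
  have hset : convSet M j0 xp =
      ⋂ k : ℕ, ⋃ Nn : ℕ, ⋂ n : ℕ,
        {σ : CodeSpace E | Nn ≤ n →
          dist (M.orbit j0 xp σ n) (M.orbit j0 xp σ Nn) < 1 / (k + 1)} := by
    ext σ
    simp only [convSet, Set.mem_setOf_eq, Set.mem_iInter, Set.mem_iUnion]
    constructor
    · intro ⟨l, hl⟩ k
      have hc : CauchySeq (fun n : ℕ => M.orbit j0 xp σ n) := hl.cauchySeq
      obtain ⟨Nn, hNn⟩ := Metric.cauchySeq_iff'.1 hc (1 / (k + 1)) (by positivity)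
      exact ⟨Nn, fun n hn => hNn n hn⟩
    · intro h
      have hc : CauchySeq (fun n : ℕ => M.orbit j0 xp σ n) := by
        refine Metric.cauchySeq_iff'.2 fun ε hε => ?_
        obtain ⟨k, hk⟩ := exists_nat_one_div_lt hε
        obtain ⟨Nn, hNn⟩ := h k
        exact ⟨Nn, fun n hn => lt_trans (hNn n hn) (by exact_mod_cast hk)⟩
      exact cauchySeq_tendsto_of_complete hc
  rw [hset]
  refine MeasurableSet.iInter fun k => MeasurableSet.iUnion fun Nn =>
    MeasurableSet.iInter fun n => ?_
  by_cases h : Nn ≤ n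
  · have : {σ : CodeSpace E | Nn ≤ n →
        dist (M.orbit j0 xp σ n) (M.orbit j0 xp σ Nn) < 1 / (k + 1)}
        = (fun σ => dist (M.orbit j0 xp σ n) (M.orbit j0 xp σ Nn)) ⁻¹' Set.Iio (1 / (k + 1)) := by
      ext σ; simp [h]
    rw [this]
    exact measurable_orbit_dist M j0 xp n Nn measurableSet_Iio
  · have : {σ : CodeSpace E | Nn ≤ n →
        dist (M.orbit j0 xp σ n) (M.orbit j0 xp σ Nn) < 1 / (k + 1)} = Set.univ := by
      ext σ; simp [h]
    rw [this]
    exact MeasurableSet.univ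

lemma measurableSet_pathSpace (M : MarkovSystem K N E) :
    MeasurableSet (M.pathSpace) := by
  have : M.pathSpace = ⋂ n : ℤ, ⋃ e : E, ⋃ e' : E, ⋃ (_ : M.i e' = M.t e),
      ({σ : CodeSpace E | σ n = some e} ∩ {σ : CodeSpace E | σ (n + 1) = some e'}) := by
    ext σ
    simp only [MarkovSystem.pathSpace, Set.mem_setOf_eq, Set.mem_iInter, Set.mem_iUnion,
      Set.mem_inter_iff]
    constructor
    · intro h n; obtain ⟨e, e', h1, h2, h3⟩ := h n; exact ⟨e, e', h3, h1, h2⟩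
    · intro h n; obtain ⟨e, e', h3, h1, h2⟩ := h n; exact ⟨e, e', h1, h2, h3⟩
  rw [this]
  refine MeasurableSet.iInter fun n => MeasurableSet.iUnion fun e =>
    MeasurableSet.iUnion fun e' => MeasurableSet.iUnion fun _ => MeasurableSet.inter ?_ ?_
  · exact (measurable_pi_apply n) (measurableSet_singleton _)
  · exact (measurable_pi_apply (n + 1)) (measurableSet_singleton _)

lemma codeDomain_eq (M : MarkovSystem K N E) (j0 : N) (xp : N → K) :
    M.codeDomain j0 xp = M.pathSpace ∩ convSet M j0 xp := rfl

lemma measurableSet_codeDomain [CompleteSpace K] (M : MarkovSystem K N E)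
    (j0 : N) (xp : N → K) :
    MeasurableSet (M.codeDomain j0 xp) := by
  rw [codeDomain_eq]
  exact (measurableSet_pathSpace M).inter (pastAlgebra_le _ (measurableSet_convSet M j0 xp))

end Aux1


section Aux2

variable {E : Type*} [Countable E]

lemma measurableSet_cyl1 (eo : Option E) : MeasurableSet {τ : CodeSpace E | τ 1 = eo} :=
  (measurable_pi_apply 1) (measurableSet_singleton _)

variable (Λ : Measure (CodeSpace E)) [IsProbabilityMeasure Λ]

lemma isProbabilityMeasure_trim_past : IsProbabilityMeasure (Λ.trim pastAlgebra_le) :=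
  ⟨by rw [trim_measurableSet_eq pastAlgebra_le MeasurableSet.univ]; exact measure_univ⟩

/-- Abbreviation for the conditional expectation of `1_{_1[eo]}` given the past. -/
noncomputable def gfun (eo : Option E) : CodeSpace E → ℝ :=
  Λ[Set.indicator {τ : CodeSpace E | τ 1 = eo} (fun _ => (1 : ℝ)) | pastAlgebra E]

lemma integrable_ind (eo : Option E) :
    Integrable (Set.indicator {τ : CodeSpace E | τ 1 = eo} fun _ => (1 : ℝ)) Λ :=
  (integrable_const 1).indicator (measurableSet_cyl1 eo)

lemma gfun_nonneg (eo : Option E) : 0 ≤ᵐ[Λ] gfun Λ eo :=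
  condExp_nonneg (Eventually.of_forall fun σ =>
    Set.indicator_nonneg (fun _ _ => zero_le_one) σ)

lemma gfun_le_one (eo : Option E) : gfun Λ eo ≤ᵐ[Λ] fun _ => 1 := by
  have h := condExp_mono (m := pastAlgebra E) (μ := Λ) (integrable_ind Λ eo)
    (integrable_const (1 : ℝ))
    (Eventually.of_forall fun σ => Set.indicator_le_self' (fun _ _ => zero_le_one) σ)
  rwa [condExp_const pastAlgebra_le] at h

lemma measurable_ofReal_gfun_past (eo : Option E) :
    Measurable[pastAlgebra E] (fun σ => ENNReal.ofReal (gfun Λ eo σ)) :=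
  ENNReal.measurable_ofReal.comp stronglyMeasurable_condExp.measurable

lemma measurable_ofReal_gfun (eo : Option E) :
    Measurable (fun σ => ENNReal.ofReal (gfun Λ eo σ)) :=
  (measurable_ofReal_gfun_past Λ eo).mono pastAlgebra_le le_rfl

lemma setLintegral_gfun (eo : Option E) {A : Set (CodeSpace E)}
    (hA : MeasurableSet[pastAlgebra E] A) :
    ∫⁻ σ in A, ENNReal.ofReal (gfun Λ eo σ) ∂Λ = Λ (A ∩ {τ : CodeSpace E | τ 1 = eo}) := by
  haveI : IsProbabilityMeasure (Λ.trim (pastAlgebra_le (E := E))) :=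
    isProbabilityMeasure_trim_past Λ
  have hA' : MeasurableSet A := pastAlgebra_le _ hA
  have h1 : ∫ σ in A, gfun Λ eo σ ∂Λ
      = ∫ σ in A, Set.indicator {τ : CodeSpace E | τ 1 = eo} (fun _ => (1 : ℝ)) σ ∂Λ :=
    setIntegral_condExp pastAlgebra_le (integrable_ind Λ eo) hA
  have h2 : ∫ σ in A, Set.indicator {τ : CodeSpace E | τ 1 = eo} (fun _ => (1 : ℝ)) σ ∂Λ
      = (Λ (A ∩ {τ : CodeSpace E | τ 1 = eo})).toReal := by
    rw [setIntegral_indicator (measurableSet_cyl1 eo)]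
    simp [Measure.restrict_apply, (hA'.inter (measurableSet_cyl1 eo))]
    rfl
  have h3 : ∫⁻ σ in A, ENNReal.ofReal (gfun Λ eo σ) ∂Λ
      = ENNReal.ofReal (∫ σ in A, gfun Λ eo σ ∂Λ) :=
    (ofReal_integral_eq_lintegral_ofReal (integrable_condExp.integrableOn)
      (ae_restrict_of_ae (gfun_nonneg Λ eo))).symm
  rw [h3, h1, h2, ENNReal.ofReal_toReal (measure_ne_top Λ _)]

/-- Pull-out property: integrating a past-measurable function over a cylinder. -/
lemma lintegral_cyl_eq_lintegral_gfun_mul (eo : Option E) (h : CodeSpace E → ℝ≥0∞)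
    (hh : Measurable[pastAlgebra E] h) :
    ∫⁻ σ in {τ : CodeSpace E | τ 1 = eo}, h σ ∂Λ
      = ∫⁻ σ, ENNReal.ofReal (gfun Λ eo σ) * h σ ∂Λ := by
  set ν1 := Λ.restrict {τ : CodeSpace E | τ 1 = eo} with hν1
  set ν2 := Λ.withDensity (fun σ => ENNReal.ofReal (gfun Λ eo σ)) with hν2
  have hν2fin : IsFiniteMeasure ν2 := by
    constructor
    rw [hν2, withDensity_apply _ MeasurableSet.univ, Measure.restrict_univ,
      ← setLIntegral_univ, setLintegral_gfun Λ eo MeasurableSet.univ]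
    exact lt_of_le_of_lt (measure_mono (Set.inter_subset_right)) (measure_lt_top Λ _)
  haveI := hν2fin
  have htrim : ν2.trim pastAlgebra_le = ν1.trim pastAlgebra_le := by
    haveI : IsFiniteMeasure (ν2.trim (pastAlgebra_le (E := E))) := by
      constructor
      rw [trim_measurableSet_eq pastAlgebra_le MeasurableSet.univ]
      exact measure_lt_top ν2 _
    refine ext_of_generate_finite _ rfl isPiSystem_pastGen ?_ ?_
    · rintro s ⟨es, hes, rfl⟩
      have hsF : MeasurableSet[pastAlgebra E] (cylSetL (1 - (es.length : ℤ)) es) :=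
        MeasurableSpace.measurableSet_generateFrom ⟨es, hes, rfl⟩
      have hs' : MeasurableSet (cylSetL (1 - (es.length : ℤ)) es) := pastAlgebra_le _ hsF
      rw [trim_measurableSet_eq pastAlgebra_le hsF, trim_measurableSet_eq pastAlgebra_le hsF,
        hν2, withDensity_apply _ hs', setLintegral_gfun Λ eo hsF, hν1,
        Measure.restrict_apply hs']
    · rw [trim_measurableSet_eq pastAlgebra_le MeasurableSet.univ,
        trim_measurableSet_eq pastAlgebra_le MeasurableSet.univ,
        hν2, withDensity_apply _ MeasurableSet.univ, Measure.restrict_univ,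
        ← setLIntegral_univ, setLintegral_gfun Λ eo MeasurableSet.univ, hν1,
        Measure.restrict_apply MeasurableSet.univ]
  have h1 : ∫⁻ σ, h σ ∂ν1 = ∫⁻ σ, h σ ∂ν2 := by
    rw [← lintegral_trim pastAlgebra_le hh (μ := ν1), ← lintegral_trim pastAlgebra_le hh (μ := ν2),
      htrim]
  calc ∫⁻ σ in {τ : CodeSpace E | τ 1 = eo}, h σ ∂Λ = ∫⁻ σ, h σ ∂ν1 := rfl
    _ = ∫⁻ σ, h σ ∂ν2 := h1
    _ = ∫⁻ σ, ENNReal.ofReal (gfun Λ eo σ) * h σ ∂Λ := by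
        rw [hν2, lintegral_withDensity_eq_lintegral_mul Λ (measurable_ofReal_gfun Λ eo)
          (hh.mono pastAlgebra_le le_rfl)]
        rfl

/-- The conditional probabilities sum to one a.e. -/
lemma sum_gfun_eq_one :
    ∀ᵐ σ ∂Λ, ∑' eo : Option E, ENNReal.ofReal (gfun Λ eo σ) = 1 := by
  haveI : IsProbabilityMeasure (Λ.trim (pastAlgebra_le (E := E))) :=
    isProbabilityMeasure_trim_past Λ
  have hS : Measurable[pastAlgebra E]
      (fun σ => ∑' eo : Option E, ENNReal.ofReal (gfun Λ eo σ)) :=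
    Measurable.ennreal_tsum fun eo => measurable_ofReal_gfun_past Λ eo
  refine ae_eq_of_ae_eq_trim
    (hm := pastAlgebra_le) (μ := Λ)
    (f₁ := fun σ => ∑' eo : Option E, ENNReal.ofReal (gfun Λ eo σ)) (f₂ := fun _ => 1) ?_
  refine ae_eq_of_forall_setLIntegral_eq_of_sigmaFinite hS measurable_const ?_
  intro A hA _
  have hA' : MeasurableSet A := pastAlgebra_le _ hA
  have hcover : A = ⋃ eo : Option E, A ∩ {τ : CodeSpace E | τ 1 = eo} := by
    ext σ
    simp only [Set.mem_iUnion, Set.mem_inter_iff, Set.mem_setOf_eq]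
    exact ⟨fun h => ⟨σ 1, h, rfl⟩, fun ⟨eo, h, _⟩ => h⟩
  have hdisj : Pairwise (Function.onFun Disjoint
      fun eo : Option E => A ∩ {τ : CodeSpace E | τ 1 = eo}) := by
    intro eo eo' hne
    refine Set.disjoint_left.2 fun σ hσ hσ' => hne ?_
    rw [← hσ.2, ← hσ'.2]
  have hΛA : Λ A = ∑' eo : Option E, Λ (A ∩ {τ : CodeSpace E | τ 1 = eo}) := by
    conv_lhs => rw [hcover]
    exact measure_iUnion hdisj fun eo => hA'.inter (measurableSet_cyl1 eo)
  have hLHS : ∫⁻ σ in A, (∑' eo : Option E, ENNReal.ofReal (gfun Λ eo σ))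
        ∂(Λ.trim pastAlgebra_le) = Λ A := by
    rw [← lintegral_indicator hA, lintegral_trim pastAlgebra_le (hS.indicator hA),
      lintegral_indicator hA']
    rw [lintegral_tsum fun eo => (measurable_ofReal_gfun Λ eo).aemeasurable, hΛA]
    exact tsum_congr fun eo => setLintegral_gfun Λ eo hA
  rw [hLHS, setLIntegral_one, trim_measurableSet_eq pastAlgebra_le hA]

end Aux2


section Aux3

/-- Splitting a `tsum` over `Option`. -/
lemma tsum_option_ennreal {E : Type*} [Countable E] (f : Option E → ℝ≥0∞) :
    ∑' eo : Option E, f eo = f none + ∑' e : E, f (some e) := by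
  have hsplit : ∀ eo : Option E,
      f eo = Set.indicator {(none : Option E)} f eo + eo.elim 0 (fun e => f (some e)) := by
    intro eo; cases eo <;> simp
  have hsupp : Function.support (fun eo : Option E => eo.elim 0 (fun e => f (some e)))
      ⊆ Set.range (some : E → Option E) := by
    intro eo heo
    cases eo with
    | none => simp at heo
    | some e => exact ⟨e, rfl⟩
  calc ∑' eo : Option E, f eo
      = ∑' eo : Option E,
          (Set.indicator {(none : Option E)} f eo + eo.elim 0 (fun e => f (some e))) :=
        tsum_congr hsplit
    _ = (∑' eo : Option E, Set.indicator {(none : Option E)} f eo)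
          + ∑' eo : Option E, eo.elim 0 (fun e => f (some e)) := ENNReal.tsum_add
    _ = f none + ∑' e : E, f (some e) := by
        congr 1
        · rw [tsum_eq_single (none : Option E) (fun eo heo =>
            Set.indicator_of_notMem (by simpa using heo) f)]
          simp
        · rw [← Function.Injective.tsum_eq (Option.some_injective E) hsupp]
          rfl

lemma measurable_negMulLog : Measurable Real.negMulLog :=
  Real.continuous_negMulLog.measurable

lemma negMulLog_nonneg' {a : ℝ} (h0 : 0 ≤ a) (h1 : a ≤ 1) : 0 ≤ Real.negMulLog a := by
  have : Real.negMulLog a = a * (-Real.log a) := by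
    show -a * Real.log a = _; ring
  rw [this]
  exact mul_nonneg h0 (neg_nonneg.2 (Real.log_nonpos h0 h1))

/-- Total probability: `∑_e p_e(x) = 1` for every `x ∈ K`. -/
lemma p_total {K : Type*} [MetricSpace K] [MeasurableSpace K] {N E : Type*}
    (M : MarkovSystem K N E) (x : K) :
    ∑' e : E, ENNReal.ofReal (M.p e x) = 1 := by
  have hx : x ∈ ⋃ j, M.Kset j := by rw [M.Kset_cover]; trivial
  obtain ⟨j, hj⟩ : ∃ j, x ∈ M.Kset j := by simpa using hx
  have hsupp : Function.support (fun e : E => ENNReal.ofReal (M.p e x))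
      ⊆ {e : E | M.i e = j} := by
    intro e he
    by_contra hne
    have hne' : j ≠ M.i e := fun h => hne h.symm
    have hxe : x ∉ M.Kset (M.i e) := fun hmem =>
      Set.disjoint_left.1 (M.Kset_disjoint hne') hj hmem
    simp [M.p_zero_outside e x hxe] at he
  have hreal : ∑' e : ↑{e : E | M.i e = j}, M.p e.1 x = 1 := M.p_tsum_one j x hj
  have hsummable : Summable (fun e : ↑{e : E | M.i e = j} => M.p e.1 x) := by
    by_contra h
    rw [tsum_eq_zero_of_not_summable h] at hreal
    norm_num at hreal
  calc ∑' e : E, ENNReal.ofReal (M.p e x)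
      = ∑' e : ↑{e : E | M.i e = j}, ENNReal.ofReal (M.p e.1 x) :=
        (tsum_subtype_eq_of_support_subset hsupp).symm
    _ = ENNReal.ofReal (∑' e : ↑{e : E | M.i e = j}, M.p e.1 x) :=
        (ENNReal.ofReal_tsum_of_nonneg (fun e : ↑{e : E | M.i e = j} => M.p_nonneg e.1 x) hsummable).symm
    _ = 1 := by rw [hreal]; exact ENNReal.ofReal_one

/-- The Gibbs inequality, single term. -/
lemma gibbs_term {a b : ℝ} (ha0 : 0 ≤ a) (ha1 : a ≤ 1) (hb0 : 0 ≤ b) (hb1 : b ≤ 1) :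
    ENNReal.ofReal (Real.negMulLog a) + ENNReal.ofReal a
      ≤ ENNReal.ofReal a * (if b = 0 then ⊤ else ENNReal.ofReal (-Real.log b))
        + ENNReal.ofReal b := by
  by_cases hb : b = 0
  · rw [if_pos hb]
    by_cases haz : a = 0
    · subst haz; simp [Real.negMulLog_zero]
    · have ha' : (0 : ℝ) < a := lt_of_le_of_ne ha0 (Ne.symm haz)
      have : ENNReal.ofReal a * ⊤ = ⊤ :=
        ENNReal.mul_top (by simp [ENNReal.ofReal_eq_zero, not_le, ha'])
      rw [this]
      exact le_top.trans le_self_add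
  · rw [if_neg hb]
    have hb' : (0 : ℝ) < b := lt_of_le_of_ne hb0 (Ne.symm hb)
    have hlogb : 0 ≤ -Real.log b := neg_nonneg.2 (Real.log_nonpos hb0 hb1)
    rw [← ENNReal.ofReal_mul ha0, ← ENNReal.ofReal_add (negMulLog_nonneg' ha0 ha1) ha0,
      ← ENNReal.ofReal_add (mul_nonneg ha0 hlogb) hb0]
    apply ENNReal.ofReal_le_ofReal
    by_cases haz : a = 0
    · subst haz; simp [Real.negMulLog_zero]; linarith
    · have ha' : (0 : ℝ) < a := lt_of_le_of_ne ha0 (Ne.symm haz)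
      have hkey : Real.log (b / a) ≤ b / a - 1 := Real.log_le_sub_one_of_pos (by positivity)
      rw [Real.log_div (ne_of_gt hb') (ne_of_gt ha')] at hkey
      have : Real.negMulLog a = -a * Real.log a := rfl
      rw [this]
      have hmul : a * (Real.log b - Real.log a) ≤ a * (b / a - 1) :=
        mul_le_mul_of_nonneg_left hkey ha0
      have : a * (b / a - 1) = b - a := by field_simp
      nlinarith [hmul]

/-- Equality case of the Gibbs inequality. -/
lemma gibbs_term_eq {a b : ℝ} (ha0 : 0 ≤ a) (ha1 : a ≤ 1) (hb0 : 0 ≤ b) (hb1 : b ≤ 1)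
    (hfin : ENNReal.ofReal a * (if b = 0 then ⊤ else ENNReal.ofReal (-Real.log b))
        + ENNReal.ofReal b ≠ ⊤)
    (heq : ENNReal.ofReal (Real.negMulLog a) + ENNReal.ofReal a
      = ENNReal.ofReal a * (if b = 0 then ⊤ else ENNReal.ofReal (-Real.log b))
        + ENNReal.ofReal b) : a = b := by
  by_cases hb : b = 0
  · rw [if_pos hb] at hfin
    by_cases haz : a = 0
    · rw [haz, hb]
    · exfalso
      have ha' : (0 : ℝ) < a := lt_of_le_of_ne ha0 (Ne.symm haz)
      have : ENNReal.ofReal a * ⊤ = ⊤ :=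
        ENNReal.mul_top (by simp [ENNReal.ofReal_eq_zero, not_le, ha'])
      rw [this] at hfin
      simp at hfin
  · rw [if_neg hb] at heq
    have hb' : (0 : ℝ) < b := lt_of_le_of_ne hb0 (Ne.symm hb)
    have hlogb : 0 ≤ -Real.log b := neg_nonneg.2 (Real.log_nonpos hb0 hb1)
    rw [← ENNReal.ofReal_mul ha0, ← ENNReal.ofReal_add (negMulLog_nonneg' ha0 ha1) ha0,
      ← ENNReal.ofReal_add (mul_nonneg ha0 hlogb) hb0] at heq
    have hre : Real.negMulLog a + a = a * (-Real.log b) + b :=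
      (ENNReal.ofReal_eq_ofReal_iff
        (add_nonneg (negMulLog_nonneg' ha0 ha1) ha0)
        (add_nonneg (mul_nonneg ha0 hlogb) hb0)).1 heq
    have hnml : Real.negMulLog a = -a * Real.log a := rfl
    by_cases haz : a = 0
    · exfalso
      rw [haz] at hre
      simp [Real.negMulLog_zero] at hre
      exact hb hre.symm
    · have ha' : (0 : ℝ) < a := lt_of_le_of_ne ha0 (Ne.symm haz)
      by_contra hab
      have hne1 : b / a ≠ 1 := fun h =>
        hab ((div_eq_one_iff_eq (ne_of_gt ha')).1 h).symm
      have hkey : Real.log (b / a) < b / a - 1 :=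
        Real.log_lt_sub_one_of_pos (by positivity) hne1
      rw [Real.log_div (ne_of_gt hb') (ne_of_gt ha')] at hkey
      have hmul : a * (Real.log b - Real.log a) < a * (b / a - 1) :=
        mul_lt_mul_of_pos_left hkey ha'
      have hid : a * (b / a - 1) = b - a := by field_simp
      nlinarith [hre, hmul]

end Aux3


variable {K : Type*} [MetricSpace K] [CompleteSpace K] [MeasurableSpace K] [BorelSpace K]
  {N E : Type*} [Countable N] [Countable E]

/-- Let `Λ ∈ P_S(Σ̄)` with `h_S(Λ) < ∞`. Then `h_S(Λ) + ∫ u dΛ ≤ 0`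
(equivalently `h_S(Λ) ≤ ∫ (-u) dΛ`), with equality if and only if `Λ ∈ E(M)`. -/
theorem entropy_le_lintegral_negEnergy_iff_equilibrium
    (M : MarkovSystem K N E) (j0 : N) (xp : N → K) (hxp : ∀ j, xp j ∈ M.Kset j)
    (Λ : Measure (CodeSpace E)) (hprob : IsProbabilityMeasure Λ)
    (hinv : Measure.map (shiftMap E) Λ = Λ) (hfin : entropyS Λ ≠ ⊤) :
    entropyS Λ ≤ ∫⁻ σ, M.negEnergy j0 xp σ ∂Λ ∧
      (entropyS Λ = ∫⁻ σ, M.negEnergy j0 xp σ ∂Λ ↔ M.IsEquilibrium j0 xp Λ) := by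
  classical
  haveI := hprob
  have hDmeas : MeasurableSet (M.codeDomain j0 xp) := measurableSet_codeDomain M j0 xp
  by_cases hD1 : Λ (M.codeDomain j0 xp) = 1
  · -- main case: Λ(D) = 1
    have hDc0 : Λ (M.codeDomain j0 xp)ᶜ = 0 := (prob_compl_eq_zero_iff hDmeas).2 hD1
    have hDae : ∀ᵐ σ ∂Λ, σ ∈ M.codeDomain j0 xp :=
      (measure_eq_zero_iff_ae_notMem.1 hDc0).mono fun σ h => Set.not_notMem.1 h
    haveI : IsProbabilityMeasure (Λ.trim (pastAlgebra_le (E := E))) :=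
      isProbabilityMeasure_trim_past Λ
    -- the measurable limit function G
    have htrimconv : ∀ᵐ σ ∂(Λ.trim (pastAlgebra_le (E := E))),
        ∃ l, Tendsto (fun n : ℕ => M.orbit j0 xp σ n) atTop (𝓝 l) := by
      have h1 : (Λ.trim (pastAlgebra_le (E := E))) (convSet M j0 xp)ᶜ = 0 := by
        rw [trim_measurableSet_eq pastAlgebra_le (measurableSet_convSet M j0 xp).compl]
        refine measure_mono_null ?_ hDc0
        refine Set.compl_subset_compl.2 ?_
        rw [codeDomain_eq]
        exact Set.inter_subset_right
      exact (measure_eq_zero_iff_ae_notMem.1 h1).mono fun σ h => Set.not_notMem.1 h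
    obtain ⟨G, hGmeas, hGtendsto⟩ :=
      @measurable_limit_of_tendsto_metrizable_ae (CodeSpace E) K (pastAlgebra E) _ _ _ _
        ℕ _ (Λ.trim (pastAlgebra_le (E := E)))
        (fun (n : ℕ) (σ : CodeSpace E) => M.orbit j0 xp σ n) atTop _
        (fun n => (measurable_orbit_past M j0 xp n).aemeasurable) htrimconv
    have hGt : ∀ᵐ σ ∂Λ, Tendsto (fun n : ℕ => M.orbit j0 xp σ n) atTop (𝓝 (G σ)) :=
      ae_of_ae_trim pastAlgebra_le hGtendsto
    have hcode : ∀ᵐ σ ∂Λ, M.code j0 xp σ = G σ := by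
      filter_upwards [hDae, hGt] with σ hσD hσt
      unfold MarkovSystem.code
      rw [dif_pos hσD]
      exact tendsto_nhds_unique hσD.2.choose_spec hσt
    -- notation
    set NE : E → CodeSpace E → ℝ≥0∞ := fun e σ =>
      if M.p e (G σ) = 0 then ⊤ else ENNReal.ofReal (-Real.log (M.p e (G σ))) with hNE
    have hqm : ∀ e : E, Measurable[pastAlgebra E] fun σ => M.p e (G σ) := fun e =>
      (M.p_measurable e).comp hGmeas
    have hNEm : ∀ e : E, Measurable[pastAlgebra E] (NE e) := by
      intro e
      refine Measurable.ite ((hqm e) (measurableSet_singleton 0)) measurable_const ?_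
      exact ENNReal.measurable_ofReal.comp ((Real.measurable_log.comp (hqm e)).neg)
    have hsome : ∀ᵐ σ ∂Λ, ∃ e : E, σ 1 = some e := by
      filter_upwards [hDae] with σ hσ
      obtain ⟨e, e', h1, _, _⟩ := hσ.1 1
      exact ⟨e, h1⟩
    have hnone : Λ {τ : CodeSpace E | τ 1 = none} = 0 := by
      rw [measure_eq_zero_iff_ae_notMem]
      filter_upwards [hsome] with σ hσ hmem
      obtain ⟨e, he⟩ := hσ
      rw [hmem] at he
      exact (Option.some_ne_none e) he.symm
    have hgnone : gfun Λ (none : Option E) =ᵐ[Λ] 0 := by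
      have hind : (Set.indicator {τ : CodeSpace E | τ 1 = (none : Option E)} fun _ => (1 : ℝ))
          =ᵐ[Λ] 0 := by
        filter_upwards [measure_eq_zero_iff_ae_notMem.1 hnone] with σ hσ
        exact Set.indicator_of_notMem hσ (fun _ => (1 : ℝ))
      refine (condExp_congr_ae (m := pastAlgebra E) hind).trans ?_
      rw [condExp_zero]
    -- decomposition of entropy
    have hnmlm : ∀ e : E, Measurable fun σ =>
        ENNReal.ofReal (Real.negMulLog (gfun Λ (some e) σ)) := fun e =>
      ENNReal.measurable_ofReal.comp (measurable_negMulLog.comp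
        ((stronglyMeasurable_condExp.mono pastAlgebra_le).measurable))
    have hENT : entropyS Λ
        = ∫⁻ σ, ∑' e : E, ENNReal.ofReal (Real.negMulLog (gfun Λ (some e) σ)) ∂Λ := by
      have hdef : entropyS Λ = ∑' eo : Option E,
          ∫⁻ σ, ENNReal.ofReal (Real.negMulLog (gfun Λ eo σ)) ∂Λ := rfl
      have hzero : ∫⁻ σ, ENNReal.ofReal (Real.negMulLog (gfun Λ (none : Option E) σ)) ∂Λ
          = 0 := by
        have h0 : (fun σ => ENNReal.ofReal (Real.negMulLog (gfun Λ (none : Option E) σ)))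
            =ᵐ[Λ] 0 := by
          filter_upwards [hgnone] with σ hσ
          simp [hσ, Real.negMulLog_zero]
        rw [lintegral_congr_ae h0]
        simp
      rw [hdef, tsum_option_ennreal, hzero, zero_add,
        ← lintegral_tsum (fun e => (hnmlm e).aemeasurable)]
    -- decomposition of the energy integral
    have hNEdecomp : ∫⁻ σ, M.negEnergy j0 xp σ ∂Λ
        = ∑' e : E, ∫⁻ σ, ENNReal.ofReal (gfun Λ (some e) σ) * NE e σ ∂Λ := by
      have step1 : (fun σ => M.negEnergy j0 xp σ) =ᵐ[Λ]
          fun σ => ∑' e : E, Set.indicator {τ : CodeSpace E | τ 1 = some e} (NE e) σ := by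
        filter_upwards [hDae, hcode] with σ hσD hσc
        obtain ⟨e₁, e', he₁, _, _⟩ := hσD.1 1
        have hmem : σ ∈ {τ : CodeSpace E | τ 1 = some e₁} := he₁
        have hcollapse : ∑' e : E, Set.indicator {τ : CodeSpace E | τ 1 = some e} (NE e) σ
            = NE e₁ σ := by
          rw [tsum_eq_single e₁ ?_]
          · rw [Set.indicator_of_mem hmem]
          · intro e hne
            refine Set.indicator_of_notMem (fun hmem' => hne ?_) _
            rw [Set.mem_setOf_eq] at hmem'
            exact Option.some_injective E (hmem'.symm.trans he₁)
        show M.negEnergy j0 xp σ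
            = ∑' e : E, Set.indicator {τ : CodeSpace E | τ 1 = some e} (NE e) σ
        rw [hcollapse]
        unfold MarkovSystem.negEnergy
        rw [if_pos hσD, he₁]
        show (if M.p e₁ (M.code j0 xp σ) = 0 then ⊤
            else ENNReal.ofReal (-Real.log (M.p e₁ (M.code j0 xp σ)))) = NE e₁ σ
        rw [hσc]
      rw [lintegral_congr_ae step1,
        lintegral_tsum (fun e => (((hNEm e).mono pastAlgebra_le le_rfl).indicator
          (measurableSet_cyl1 (some e))).aemeasurable)]
      refine tsum_congr fun e => ?_
      rw [lintegral_indicator (measurableSet_cyl1 (some e)),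
        lintegral_cyl_eq_lintegral_gfun_mul Λ (some e) (NE e) (hNEm e)]
    -- pointwise facts
    have hg01 : ∀ᵐ σ ∂Λ, ∀ e : E, 0 ≤ gfun Λ (some e) σ ∧ gfun Λ (some e) σ ≤ 1 :=
      (ae_all_iff).2 fun e => (gfun_nonneg Λ (some e)).and (gfun_le_one Λ (some e))
    have hsum1 : ∀ᵐ σ ∂Λ, ∑' e : E, ENNReal.ofReal (gfun Λ (some e) σ) = 1 := by
      filter_upwards [sum_gfun_eq_one Λ, hgnone] with σ h1 h2
      rw [tsum_option_ennreal] at h1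
      simpa [h2] using h1
    have hq1 : ∀ σ, ∑' e : E, ENNReal.ofReal (M.p e (G σ)) = 1 := fun σ => p_total M (G σ)
    have hterm : ∀ᵐ σ ∂Λ, ∀ e : E,
        ENNReal.ofReal (Real.negMulLog (gfun Λ (some e) σ)) + ENNReal.ofReal (gfun Λ (some e) σ)
          ≤ ENNReal.ofReal (gfun Λ (some e) σ) * NE e σ + ENNReal.ofReal (M.p e (G σ)) := by
      filter_upwards [hg01] with σ hσ e
      have h := gibbs_term (hσ e).1 (hσ e).2 (M.p_nonneg e (G σ)) (M.p_le_one e (G σ))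
      simpa [hNE] using h
    have hmain : ∀ᵐ σ ∂Λ,
        (∑' e : E, ENNReal.ofReal (Real.negMulLog (gfun Λ (some e) σ)))
          ≤ ∑' e : E, ENNReal.ofReal (gfun Λ (some e) σ) * NE e σ := by
      filter_upwards [hterm, hsum1] with σ hte hs1
      have h1 : (∑' e : E, ENNReal.ofReal (Real.negMulLog (gfun Λ (some e) σ))) + 1
          ≤ (∑' e : E, ENNReal.ofReal (gfun Λ (some e) σ) * NE e σ) + 1 := by
        conv_lhs => rw [← hs1]
        conv_rhs => rw [← hq1 σ]
        rw [← ENNReal.tsum_add, ← ENNReal.tsum_add]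
        exact ENNReal.tsum_le_tsum hte
      exact (ENNReal.add_le_add_iff_right ENNReal.one_ne_top).1 h1
    have hEnmeas : ∀ e : E, Measurable fun σ =>
        ENNReal.ofReal (gfun Λ (some e) σ) * NE e σ := fun e =>
      (measurable_ofReal_gfun Λ (some e)).mul ((hNEm e).mono pastAlgebra_le le_rfl)
    have hIneq : entropyS Λ ≤ ∫⁻ σ, M.negEnergy j0 xp σ ∂Λ := by
      rw [hENT, hNEdecomp, ← lintegral_tsum (fun e => (hEnmeas e).aemeasurable)]
      exact lintegral_mono_ae hmain
    refine ⟨hIneq, ?_, ?_⟩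
    · -- equality → equilibrium
      intro heq
      have hEntm : Measurable fun σ =>
          ∑' e : E, ENNReal.ofReal (Real.negMulLog (gfun Λ (some e) σ)) :=
        Measurable.ennreal_tsum hnmlm
      have hEnm : Measurable fun σ =>
          ∑' e : E, ENNReal.ofReal (gfun Λ (some e) σ) * NE e σ :=
        Measurable.ennreal_tsum hEnmeas
      have hEntint : ∫⁻ σ, (∑' e : E,
          ENNReal.ofReal (Real.negMulLog (gfun Λ (some e) σ))) ∂Λ = entropyS Λ := hENT.symm
      have hEnint : ∫⁻ σ, (∑' e : E, ENNReal.ofReal (gfun Λ (some e) σ) * NE e σ) ∂Λ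
          = ∫⁻ σ, M.negEnergy j0 xp σ ∂Λ := by
        rw [hNEdecomp, ← lintegral_tsum (fun e => (hEnmeas e).aemeasurable)]
      have hEnfin : ∫⁻ σ, (∑' e : E, ENNReal.ofReal (gfun Λ (some e) σ) * NE e σ) ∂Λ ≠ ⊤ := by
        rw [hEnint, ← heq]; exact hfin
      have hsub : ∫⁻ σ, ((∑' e : E, ENNReal.ofReal (gfun Λ (some e) σ) * NE e σ)
          - (∑' e : E, ENNReal.ofReal (Real.negMulLog (gfun Λ (some e) σ)))) ∂Λ = 0 := by
        rw [lintegral_sub hEntm (by rw [hEntint]; exact hfin) hmain,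
          hEntint, hEnint, heq, tsub_self]
      have hEq0 : (fun σ => (∑' e : E, ENNReal.ofReal (gfun Λ (some e) σ) * NE e σ)
          - (∑' e : E, ENNReal.ofReal (Real.negMulLog (gfun Λ (some e) σ)))) =ᵐ[Λ] 0 :=
        (lintegral_eq_zero_iff' ((hEnm.sub hEntm).aemeasurable)).1 hsub
      have hEE : ∀ᵐ σ ∂Λ, (∑' e : E, ENNReal.ofReal (Real.negMulLog (gfun Λ (some e) σ)))
          = ∑' e : E, ENNReal.ofReal (gfun Λ (some e) σ) * NE e σ := by
        filter_upwards [hEq0, hmain] with σ h0 hle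
        exact le_antisymm hle (tsub_eq_zero_iff_le.1 h0)
      have hEnlt : ∀ᵐ σ ∂Λ, (∑' e : E, ENNReal.ofReal (gfun Λ (some e) σ) * NE e σ) < ⊤ :=
        ae_lt_top hEnm hEnfin
      have hgq : ∀ᵐ σ ∂Λ, ∀ e : E, gfun Λ (some e) σ = M.p e (G σ) := by
        filter_upwards [hEE, hEnlt, hg01, hsum1, hterm] with σ hee hlt h01 hs1 hte
        have hsums : (∑' e : E, (ENNReal.ofReal (Real.negMulLog (gfun Λ (some e) σ))
              + ENNReal.ofReal (gfun Λ (some e) σ)))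
            = ∑' e : E, (ENNReal.ofReal (gfun Λ (some e) σ) * NE e σ
              + ENNReal.ofReal (M.p e (G σ))) := by
          rw [ENNReal.tsum_add, ENNReal.tsum_add, hs1, hq1 σ, hee]
        have hLfin : (∑' e : E, (ENNReal.ofReal (Real.negMulLog (gfun Λ (some e) σ))
            + ENNReal.ofReal (gfun Λ (some e) σ))) ≠ ⊤ := by
          rw [ENNReal.tsum_add, hs1, hee]
          exact ENNReal.add_ne_top.2 ⟨hlt.ne, ENNReal.one_ne_top⟩
        intro e
        have htermeq : ENNReal.ofReal (Real.negMulLog (gfun Λ (some e) σ))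
              + ENNReal.ofReal (gfun Λ (some e) σ)
            = ENNReal.ofReal (gfun Λ (some e) σ) * NE e σ + ENNReal.ofReal (M.p e (G σ)) := by
          by_contra hne
          exact absurd hsums (ne_of_lt (ENNReal.tsum_lt_tsum hLfin hte
            (lt_of_le_of_ne (hte e) hne)))
        have hfin' : ENNReal.ofReal (gfun Λ (some e) σ) * NE e σ
            + ENNReal.ofReal (M.p e (G σ)) ≠ ⊤ :=
          ne_top_of_le_ne_top (hsums ▸ hLfin) (ENNReal.le_tsum e)
        exact gibbs_term_eq (h01 e).1 (h01 e).2 (M.p_nonneg e (G σ)) (M.p_le_one e (G σ))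
          (by simpa [hNE] using hfin') (by simpa [hNE] using htermeq)
      refine ⟨hprob, hinv, hD1, fun e => ?_⟩
      have h1 : ∀ᵐ σ ∂Λ, gfun Λ (some e) σ = M.p e (G σ) := (ae_all_iff.1 hgq) e
      filter_upwards [h1, hcode] with σ hσ1 hσc
      show gfun Λ (some e) σ = M.p e (M.code j0 xp σ)
      rw [hσ1, hσc]
    · -- equilibrium → equality
      intro hEq
      have hgq : ∀ᵐ σ ∂Λ, ∀ e : E, gfun Λ (some e) σ = M.p e (G σ) := by
        rw [ae_all_iff]
        intro e
        have h1 := hEq.2.2.2 e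
        filter_upwards [h1, hcode] with σ hσ1 hσc
        show gfun Λ (some e) σ = M.p e (G σ)
        rw [← hσc]
        exact hσ1
      have hEE : (fun σ => ∑' e : E, ENNReal.ofReal (Real.negMulLog (gfun Λ (some e) σ)))
          =ᵐ[Λ] fun σ => ∑' e : E, ENNReal.ofReal (gfun Λ (some e) σ) * NE e σ := by
        filter_upwards [hgq] with σ hσ
        refine tsum_congr fun e => ?_
        rw [hσ e]
        by_cases hb : M.p e (G σ) = 0
        · simp [hNE, hb, Real.negMulLog_zero]
        · have hb0 : 0 ≤ M.p e (G σ) := M.p_nonneg e (G σ)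
          have hml : Real.negMulLog (M.p e (G σ))
              = M.p e (G σ) * (-Real.log (M.p e (G σ))) := by
            show -_ * _ = _; ring
          simp only [hNE, if_neg hb]
          rw [hml, ENNReal.ofReal_mul hb0]
      rw [hENT, hNEdecomp, ← lintegral_tsum (fun e => (hEnmeas e).aemeasurable)]
      exact lintegral_congr_ae hEE
  · -- degenerate case: Λ(D) ≠ 1
    have hDc : Λ (M.codeDomain j0 xp)ᶜ ≠ 0 := fun h0 =>
      hD1 ((prob_compl_eq_zero_iff hDmeas).1 h0)
    have hRHS : ∫⁻ σ, M.negEnergy j0 xp σ ∂Λ = ⊤ := by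
      refine top_le_iff.1 ?_
      calc (⊤ : ℝ≥0∞) = ⊤ * Λ (M.codeDomain j0 xp)ᶜ := (ENNReal.top_mul hDc).symm
        _ = ∫⁻ σ, (M.codeDomain j0 xp)ᶜ.indicator (fun _ => (⊤ : ℝ≥0∞)) σ ∂Λ := by
            rw [lintegral_indicator hDmeas.compl, setLIntegral_const]
        _ ≤ ∫⁻ σ, M.negEnergy j0 xp σ ∂Λ := by
            refine lintegral_mono fun σ => ?_
            by_cases hσ : σ ∈ M.codeDomain j0 xp
            · rw [Set.indicator_of_notMem (by simpa using hσ)]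
              exact zero_le
            · rw [Set.indicator_of_mem (Set.mem_compl hσ)]
              unfold MarkovSystem.negEnergy
              rw [if_neg hσ]
    refine ⟨hRHS ▸ le_top, ?_, ?_⟩
    · intro h
      rw [hRHS] at h
      exact absurd h hfin
    · intro hEq
      exact absurd hEq.2.2.1 hD1
end

section
/- If the set {M ∈ E(M) : h_S(M) < ∞} is nonempty, then {M ∈ E(M) : h_S(M) < ∞} = E(u), i.e. the equilibrium states of M with finite conditional entropy are exactly the thermodynamic equilibrium states of the energy function u. -/
open MeasureTheory Filter Topology
open scoped ENNReal NNReal Classical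

noncomputable section Aux
open MeasureTheory Filter Topology
open scoped ENNReal NNReal Classical

namespace MSAux

/-! ### Generic measurability helpers -/

lemma measurable_comp_countable_range {α β γ : Type*} [MeasurableSpace α] [MeasurableSpace β]
    [MeasurableSpace γ] {g : α → β} (hg : Measurable g) (hc : (Set.range g).Countable)
    (hsing : ∀ b : β, MeasurableSet ({b} : Set β)) (f : β → γ) : Measurable (f ∘ g) := by
  intro S _
  have heq : (f ∘ g) ⁻¹' S = ⋃ b ∈ {b | b ∈ Set.range g ∧ f b ∈ S}, g ⁻¹' {b} := by
    ext a
    simp only [Set.mem_preimage, Set.mem_iUnion, Set.mem_setOf_eq, Function.comp_apply,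
      Set.mem_singleton_iff, exists_prop]
    exact ⟨fun h => ⟨g a, ⟨⟨a, rfl⟩, h⟩, rfl⟩, fun ⟨b, ⟨_, hb⟩, hba⟩ => hba ▸ hb⟩
  rw [heq]
  exact MeasurableSet.biUnion (hc.mono fun b hb => hb.1) fun b _ => hg (hsing b)

section CodeSpaceMeas

variable {E : Type*} [Countable E]

lemma measurableSet_singleton_codeSpace (τ : CodeSpace E) :
    MeasurableSet ({τ} : Set (CodeSpace E)) := by
  have h : ({τ} : Set (CodeSpace E)) = ⋂ k : ℤ, (fun σ : CodeSpace E => σ k) ⁻¹' {τ k} := by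
    ext σ; simp [funext_iff]
  rw [h]
  exact MeasurableSet.iInter fun k => measurable_pi_apply k trivial

lemma mem_cylSetL {σ : CodeSpace E} {m : ℤ} {es : List (Option E)} :
    σ ∈ cylSetL m es ↔ ∀ (k : ℕ) (h : k < es.length), σ (m + (k : ℤ)) = es.get ⟨k, h⟩ :=
  Iff.rfl

lemma measurableSet_cylSetL (m : ℤ) (es : List (Option E)) : MeasurableSet (cylSetL m es) := by
  have h : cylSetL m es = ⋂ (k : ℕ) (h : k < es.length),
      (fun σ : CodeSpace E => σ (m + (k : ℤ))) ⁻¹' {es.get ⟨k, h⟩} := by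
    ext σ
    simp only [cylSetL, Set.mem_setOf_eq, Set.mem_iInter, Set.mem_preimage,
      Set.mem_singleton_iff]
  rw [h]
  exact MeasurableSet.iInter fun k => MeasurableSet.iInter fun h => measurable_pi_apply _ trivial

lemma pastAlgebra_le : pastAlgebra E ≤ (inferInstance : MeasurableSpace (CodeSpace E)) := by
  apply MeasurableSpace.generateFrom_le
  rintro A ⟨es, -, rfl⟩
  exact measurableSet_cylSetL _ _

lemma isPiSystem_cylPast :
    IsPiSystem {A : Set (CodeSpace E) |
      ∃ es : List (Option E), es ≠ [] ∧ A = cylSetL (1 - (es.length : ℤ)) es} := by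
  have key : ∀ (es es' : List (Option E)) (σ : CodeSpace E), es'.length ≤ es.length →
      σ ∈ cylSetL (1 - (es.length : ℤ)) es → σ ∈ cylSetL (1 - (es'.length : ℤ)) es' →
      cylSetL (1 - (es.length : ℤ)) es ⊆ cylSetL (1 - (es'.length : ℤ)) es' := by
    intro es es' σ hle hσ hσ' τ hτ
    intro k hk
    have hd : (k + (es.length - es'.length) : ℕ) < es.length := by omega
    have hco : (1 - (es'.length : ℤ)) + (k : ℤ)
        = (1 - (es.length : ℤ)) + ((k + (es.length - es'.length) : ℕ) : ℤ) := by
      push_cast; omega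
    have h1 := hτ (k + (es.length - es'.length)) hd
    have h2 := hσ (k + (es.length - es'.length)) hd
    have h3 := hσ' k hk
    rw [hco, h1, ← h2, ← hco, h3]
  rintro A ⟨es, hes, rfl⟩ B ⟨es', hes', rfl⟩ ⟨σ, hσA, hσB⟩
  rcases le_total es'.length es.length with hle | hle
  · rw [Set.inter_eq_left.mpr (key es es' σ hle hσA hσB)]
    exact ⟨es, hes, rfl⟩
  · rw [Set.inter_eq_right.mpr (key es' es σ hle hσB hσA)]
    exact ⟨es', hes', rfl⟩

lemma measurableSet_eval_past {k : ℤ} (hk : k ≤ 0) (c : Option E) :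
    MeasurableSet[pastAlgebra E] {σ : CodeSpace E | σ k = c} := by
  set L := (1 - k).toNat with hLdef
  have hL1 : (L : ℤ) = 1 - k := Int.toNat_of_nonneg (by omega)
  have hLpos : 0 < L := by omega
  have heq : {σ : CodeSpace E | σ k = c}
      = ⋃ (v : Fin L → Option E) (_ : v ⟨0, hLpos⟩ = c), cylSetL k (List.ofFn v) := by
    ext σ
    simp only [Set.mem_setOf_eq, Set.mem_iUnion, exists_prop]
    constructor
    · intro h
      refine ⟨fun j => σ (k + (j : ℤ)), by simpa using h, ?_⟩
      intro k' hk'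
      have hlen : k' < L := by simpa [List.length_ofFn] using hk'
      rw [List.get_ofFn]
      simp
    · rintro ⟨v, hv0, hv⟩
      have h0 : (0 : ℕ) < (List.ofFn v).length := by simpa [List.length_ofFn] using hLpos
      have h1 := hv 0 h0
      rw [List.get_ofFn] at h1
      simpa [hv0] using h1
  rw [heq]
  refine MeasurableSet.iUnion fun v => MeasurableSet.iUnion fun hv => ?_
  apply MeasurableSpace.measurableSet_generateFrom
  refine ⟨List.ofFn v, ?_, ?_⟩
  · have hlen : (List.ofFn v).length = L := List.length_ofFn
    intro hnil
    rw [hnil] at hlen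
    simp at hlen
    omega
  · have hk' : k = 1 - ((List.ofFn v).length : ℤ) := by
      rw [List.length_ofFn]
      omega
    rw [← hk']

lemma preimage_eval_singleton {k : ℤ} (c : Option E) :
    (fun σ : CodeSpace E => σ k) ⁻¹' {c} = {σ : CodeSpace E | σ k = c} := rfl

lemma measurable_eval_past {k : ℤ} (hk : k ≤ 0) :
    Measurable[pastAlgebra E] (fun σ : CodeSpace E => σ k) := by
  refine @measurable_to_countable' (Option E) (CodeSpace E) _ _ (pastAlgebra E) _ (fun c => ?_)
  rw [preimage_eval_singleton]
  exact measurableSet_eval_past hk c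

/-- The block truncation map: keeps coordinates in `[-n, 0]`, erases the rest. -/
def blockMap (E : Type*) (n : ℕ) : CodeSpace E → CodeSpace E :=
  fun σ k => if -(n : ℤ) ≤ k ∧ k ≤ 0 then σ k else none

lemma measurable_blockMap (n : ℕ) : Measurable[pastAlgebra E] (blockMap E n) := by
  refine (@measurable_pi_iff (CodeSpace E) ℤ (fun _ => Option E) (pastAlgebra E) _
    (blockMap E n)).mpr (fun k => ?_)
  by_cases h : -(n : ℤ) ≤ k ∧ k ≤ 0
  · simp only [blockMap, if_pos h]
    exact measurable_eval_past h.2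
  · simp only [blockMap, if_neg h]
    exact measurable_const

lemma countable_range_blockMap (n : ℕ) : (Set.range (blockMap E n)).Countable := by
  have hsub : Set.range (blockMap E n) ⊆ Set.range
      (fun (v : Fin (n + 1) → Option E) => (fun k : ℤ =>
        if h : -(n : ℤ) ≤ k ∧ k ≤ 0 then v ⟨(k + n).toNat, by omega⟩ else none)) := by
    rintro _ ⟨σ, rfl⟩
    refine ⟨fun j => σ ((j : ℤ) - n), ?_⟩
    funext k
    by_cases h : -(n : ℤ) ≤ k ∧ k ≤ 0
    · simp only [blockMap, if_pos h, dif_pos h]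
      congr 1
      omega
    · simp [blockMap, if_neg h, dif_neg h]
  exact (Set.countable_range _).mono hsub

lemma measurable_of_block {γ : Type*} [MeasurableSpace γ] (n : ℕ) (G : CodeSpace E → γ)
    (hG : ∀ σ, G (blockMap E n σ) = G σ) : Measurable[pastAlgebra E] G := by
  have h : G = G ∘ blockMap E n := funext fun σ => (hG σ).symm
  rw [h]
  exact @measurable_comp_countable_range (CodeSpace E) (CodeSpace E) γ (pastAlgebra E) _ _ _
    (measurable_blockMap n) (countable_range_blockMap n) measurableSet_singleton_codeSpace G

lemma measurableSet_cylE (eo : Option E) :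
    MeasurableSet {σ : CodeSpace E | σ 1 = eo} := by
  have h : {σ : CodeSpace E | σ 1 = eo} = (fun σ : CodeSpace E => σ 1) ⁻¹' {eo} := rfl
  rw [h]
  exact measurable_pi_apply 1 trivial

end CodeSpaceMeas

/-! ### The Markov system coding machinery -/

section Markov

variable {K : Type*} [MetricSpace K] [CompleteSpace K] [MeasurableSpace K] [BorelSpace K]
  {N E : Type*} [Countable N] [Countable E]

lemma iterW_congr (M : MarkovSystem K N E) {σ τ : CodeSpace E} (m : ℕ)
    (h : ∀ k : ℤ, -(m : ℤ) ≤ k → k ≤ 0 → σ k = τ k) (y : K) :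
    M.iterW σ m y = M.iterW τ m y := by
  induction m generalizing y with
  | zero =>
    have h0 : σ 0 = τ 0 := h 0 (by norm_num) le_rfl
    simp only [MarkovSystem.iterW, h0]
  | succ n ih =>
    have hn : σ (-(n + 1 : ℤ)) = τ (-(n + 1 : ℤ)) := h _ (by push_cast; omega) (by omega)
    simp only [MarkovSystem.iterW, hn]
    exact ih (fun k hk1 hk2 => h k (by push_cast at hk1 ⊢; omega) hk2) _

lemma orbit_blockMap (M : MarkovSystem K N E) (j0 : N) (xp : N → K) (σ : CodeSpace E)
    {m n : ℕ} (hmn : m ≤ n) :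
    M.orbit j0 xp (blockMap E n σ) m = M.orbit j0 xp σ m := by
  have hblock : ∀ k : ℤ, -(m : ℤ) ≤ k → k ≤ 0 → blockMap E n σ k = σ k := by
    intro k hk1 hk2
    have : -(n : ℤ) ≤ k ∧ k ≤ 0 := ⟨by push_cast at hk1 ⊢; omega, hk2⟩
    simp [blockMap, this]
  have hm : blockMap E n σ (-(m : ℤ)) = σ (-(m : ℤ)) := hblock _ (le_refl _) (by omega)
  unfold MarkovSystem.orbit
  rw [hm]
  exact iterW_congr M m hblock _

lemma measurable_orbit (M : MarkovSystem K N E) (j0 : N) (xp : N → K) (m : ℕ) :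
    Measurable[pastAlgebra E] (fun σ => M.orbit j0 xp σ m) := by
  exact measurable_of_block m _ (fun σ => orbit_blockMap M j0 xp σ le_rfl)

/-- The set of codes whose orbit converges (the `𝓕`-measurable core of `D`). -/
def Dlim (M : MarkovSystem K N E) (j0 : N) (xp : N → K) : Set (CodeSpace E) :=
  {σ | ∃ l : K, Tendsto (fun n : ℕ => M.orbit j0 xp σ n) atTop (𝓝 l)}

lemma measurableSet_Dlim (M : MarkovSystem K N E) (j0 : N) (xp : N → K) :
    MeasurableSet[pastAlgebra E] (Dlim M j0 xp) := by
  have heq : Dlim M j0 xp = ⋂ (i : ℕ), ⋃ (nn : ℕ), ⋂ (mm : ℕ), ⋂ (n : ℕ),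
      {σ : CodeSpace E | nn ≤ mm → nn ≤ n →
        dist (M.orbit j0 xp σ mm) (M.orbit j0 xp σ n) < 1 / (i + 1)} := by
    ext σ
    simp only [Dlim, Set.mem_setOf_eq, Set.mem_iInter, Set.mem_iUnion]
    constructor
    · rintro ⟨l, hl⟩
      have hc := hl.cauchySeq
      rw [Metric.cauchySeq_iff] at hc
      intro i
      obtain ⟨nn, hnn⟩ := hc (1 / (i + 1)) (by positivity)
      exact ⟨nn, fun mm n hm hn => hnn mm hm n hn⟩
    · intro hc
      have : CauchySeq (fun n : ℕ => M.orbit j0 xp σ n) := by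
        rw [Metric.cauchySeq_iff]
        intro ε hε
        obtain ⟨i, hi⟩ := exists_nat_one_div_lt hε
        obtain ⟨nn, hnn⟩ := hc i
        exact ⟨nn, fun mm hm n hn => lt_trans (hnn mm n hm hn) (by exact_mod_cast hi)⟩
      exact cauchySeq_tendsto_of_complete this
  rw [heq]
  refine MeasurableSet.iInter fun i => MeasurableSet.iUnion fun nn =>
    MeasurableSet.iInter fun mm => MeasurableSet.iInter fun n => ?_
  by_cases h1 : nn ≤ mm
  · by_cases h2 : nn ≤ n
    · have hs : {σ : CodeSpace E | nn ≤ mm → nn ≤ n →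
          dist (M.orbit j0 xp σ mm) (M.orbit j0 xp σ n) < 1 / (i + 1)}
          = (fun σ => dist (M.orbit j0 xp σ mm) (M.orbit j0 xp σ n)) ⁻¹'
            (Set.Iio (1 / (i + 1))) := by
        ext σ; simp [h1, h2]
      rw [hs]
      have hmeas : Measurable[pastAlgebra E]
          (fun σ => dist (M.orbit j0 xp σ mm) (M.orbit j0 xp σ n)) := by
        refine measurable_of_block (max mm n) _ (fun σ => ?_)
        rw [orbit_blockMap M j0 xp σ (le_max_left mm n),
          orbit_blockMap M j0 xp σ (le_max_right mm n)]
      exact hmeas measurableSet_Iio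
    · have hs : {σ : CodeSpace E | nn ≤ mm → nn ≤ n →
          dist (M.orbit j0 xp σ mm) (M.orbit j0 xp σ n) < 1 / (i + 1)} = Set.univ := by
        ext σ; simp [h2]
      rw [hs]; exact MeasurableSet.univ
  · have hs : {σ : CodeSpace E | nn ≤ mm → nn ≤ n →
        dist (M.orbit j0 xp σ mm) (M.orbit j0 xp σ n) < 1 / (i + 1)} = Set.univ := by
      ext σ; simp [h1]
    rw [hs]; exact MeasurableSet.univ

/-- An everywhere-defined `𝓕`-measurable version of the coding map. -/
def Ftil (M : MarkovSystem K N E) (j0 : N) (xp : N → K) : CodeSpace E → K :=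
  fun σ => if h : σ ∈ Dlim M j0 xp then h.choose else xp j0

lemma tendsto_Ftil (M : MarkovSystem K N E) (j0 : N) (xp : N → K) {σ : CodeSpace E}
    (h : σ ∈ Dlim M j0 xp) :
    Tendsto (fun n : ℕ => M.orbit j0 xp σ n) atTop (𝓝 (Ftil M j0 xp σ)) := by
  rw [Ftil, dif_pos h]
  exact h.choose_spec

lemma measurable_Ftil (M : MarkovSystem K N E) (j0 : N) (xp : N → K) :
    Measurable[pastAlgebra E] (Ftil M j0 xp) := by
  refine @measurable_of_tendsto_metrizable' (CodeSpace E) K (pastAlgebra E) _ _ _ _ ℕ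
    (fun n => (Dlim M j0 xp).piecewise (fun σ => M.orbit j0 xp σ n) (fun _ => xp j0))
    (Ftil M j0 xp) atTop _ _ (fun n => ?_) ?_
  · exact Measurable.piecewise (measurableSet_Dlim M j0 xp) (measurable_orbit M j0 xp n)
      measurable_const
  · rw [tendsto_pi_nhds]
    intro σ
    by_cases h : σ ∈ Dlim M j0 xp
    · have hp : ∀ n : ℕ, (Dlim M j0 xp).piecewise (fun σ => M.orbit j0 xp σ n)
          (fun _ => xp j0) σ = M.orbit j0 xp σ n := fun n => Set.piecewise_eq_of_mem _ _ _ h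
      simp only [hp]
      exact tendsto_Ftil M j0 xp h
    · have hp : ∀ n : ℕ, (Dlim M j0 xp).piecewise (fun σ => M.orbit j0 xp σ n)
          (fun _ => xp j0) σ = xp j0 := fun n => Set.piecewise_eq_of_notMem _ _ _ h
      simp only [hp, Ftil, dif_neg h]
      exact tendsto_const_nhds

lemma code_eq_Ftil (M : MarkovSystem K N E) (j0 : N) (xp : N → K) {σ : CodeSpace E}
    (h : σ ∈ M.codeDomain j0 xp) : M.code j0 xp σ = Ftil M j0 xp σ := by
  have h2 : σ ∈ Dlim M j0 xp := h.2
  rw [MarkovSystem.code, dif_pos h, Ftil, dif_pos h2]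

lemma measurableSet_pathSpace (M : MarkovSystem K N E) : MeasurableSet M.pathSpace := by
  have heq : M.pathSpace = ⋂ n : ℤ, ⋃ (e : E) (e' : E) (_ : M.i e' = M.t e),
      ({σ : CodeSpace E | σ n = some e} ∩ {σ : CodeSpace E | σ (n + 1) = some e'}) := by
    ext σ
    simp only [MarkovSystem.pathSpace, Set.mem_setOf_eq, Set.mem_iInter, Set.mem_iUnion,
      Set.mem_inter_iff]
    constructor
    · intro h n
      obtain ⟨e, e', h1, h2, h3⟩ := h n
      exact ⟨e, e', h3, h1, h2⟩
    · intro h n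
      obtain ⟨e, e', h3, h1, h2⟩ := h n
      exact ⟨e, e', h1, h2, h3⟩
  rw [heq]
  refine MeasurableSet.iInter fun n => MeasurableSet.iUnion fun e => MeasurableSet.iUnion
    fun e' => MeasurableSet.iUnion fun _ => MeasurableSet.inter ?_ ?_
  · have h : {σ : CodeSpace E | σ n = some e} = (fun σ : CodeSpace E => σ n) ⁻¹' {some e} := rfl
    rw [h]; exact measurable_pi_apply n trivial
  · have h : {σ : CodeSpace E | σ (n + 1) = some e'}
        = (fun σ : CodeSpace E => σ (n + 1)) ⁻¹' {some e'} := rfl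
    rw [h]; exact measurable_pi_apply (n + 1) trivial

lemma measurableSet_codeDomain (M : MarkovSystem K N E) (j0 : N) (xp : N → K) :
    MeasurableSet (M.codeDomain j0 xp) := by
  have heq : M.codeDomain j0 xp = M.pathSpace ∩ Dlim M j0 xp := rfl
  rw [heq]
  exact (measurableSet_pathSpace M).inter (pastAlgebra_le _ (measurableSet_Dlim M j0 xp))

end Markov

/-! ### Conditional expectation tower lemmas -/

section Condexp

variable {E : Type*} [Countable E] (Λ : Measure (CodeSpace E)) [IsProbabilityMeasure Λ]

/-- Shorthand for the conditional expectation of the indicator of `_1[eo]` given `𝓕`. -/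
def gfun (Λ : Measure (CodeSpace E)) (eo : Option E) : CodeSpace E → ℝ :=
  Λ[Set.indicator {σ : CodeSpace E | σ 1 = eo} (fun _ => (1 : ℝ)) | pastAlgebra E]

lemma sigmaFinite_trim (Λ : Measure (CodeSpace E)) [IsProbabilityMeasure Λ] :
    SigmaFinite (Λ.trim (pastAlgebra_le (E := E))) := by
  haveI := isFiniteMeasure_trim (μ := Λ) (pastAlgebra_le (E := E))
  infer_instance

lemma integrable_indE (eo : Option E) :
    Integrable (Set.indicator {σ : CodeSpace E | σ 1 = eo} (fun _ => (1 : ℝ))) Λ :=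
  (integrable_const 1).indicator (measurableSet_cylE eo)

lemma measurable_gfun (eo : Option E) : Measurable (gfun Λ eo) := by
  exact (stronglyMeasurable_condExp.mono (pastAlgebra_le (E := E))).measurable

lemma gfun_nonneg (eo : Option E) : 0 ≤ᵐ[Λ] gfun Λ eo := by
  exact condExp_nonneg (Filter.Eventually.of_forall fun σ =>
    Set.indicator_nonneg (fun _ _ => zero_le_one) σ)

lemma gfun_le_one (eo : Option E) : gfun Λ eo ≤ᵐ[Λ] fun _ => (1 : ℝ) := by
  have h := condExp_mono (m := pastAlgebra E) (μ := Λ) (integrable_indE Λ eo)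
    (integrable_const (1 : ℝ))
    (Filter.Eventually.of_forall fun σ =>
      Set.indicator_le_self' (fun _ _ => zero_le_one) σ)
  rwa [condExp_const (pastAlgebra_le (E := E)) (1 : ℝ)] at h

lemma lintegral_ofReal_gfun (eo : Option E) :
    ∫⁻ σ, ENNReal.ofReal (gfun Λ eo σ) ∂Λ = Λ {σ : CodeSpace E | σ 1 = eo} := by
  haveI := sigmaFinite_trim Λ
  have hint : Integrable (gfun Λ eo) Λ := integrable_condExp
  rw [← ofReal_integral_eq_lintegral_ofReal hint (gfun_nonneg Λ eo)]
  have h1 : ∫ σ, gfun Λ eo σ ∂Λ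
      = ∫ σ, Set.indicator {σ : CodeSpace E | σ 1 = eo} (fun _ => (1 : ℝ)) σ ∂Λ :=
    integral_condExp (pastAlgebra_le (E := E))
  rw [h1, integral_indicator_const (1 : ℝ) (measurableSet_cylE eo)]
  simp [ENNReal.ofReal_toReal (measure_ne_top Λ _)]

lemma meas_inter_eq_setLIntegral (eo : Option E) {A : Set (CodeSpace E)}
    (hA : MeasurableSet[pastAlgebra E] A) :
    Λ (A ∩ {σ : CodeSpace E | σ 1 = eo}) = ∫⁻ σ in A, ENNReal.ofReal (gfun Λ eo σ) ∂Λ := by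
  haveI := sigmaFinite_trim Λ
  have hfin_set : ∀ t : Set (CodeSpace E), MeasurableSet t →
      (∫⁻ σ in t, ENNReal.ofReal (gfun Λ eo σ) ∂Λ) ≠ ⊤ := by
    intro t _
    refine ne_top_of_le_ne_top (measure_ne_top Λ {σ : CodeSpace E | σ 1 = eo}) ?_
    rw [← lintegral_ofReal_gfun Λ eo]
    exact setLIntegral_le_lintegral _ _
  refine @MeasurableSpace.induction_on_inter (CodeSpace E) (pastAlgebra E)
    (fun A _ => Λ (A ∩ {σ : CodeSpace E | σ 1 = eo}) = ∫⁻ σ in A, ENNReal.ofReal (gfun Λ eo σ) ∂Λ)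
    {A : Set (CodeSpace E) |
      ∃ es : List (Option E), es ≠ [] ∧ A = cylSetL (1 - (es.length : ℤ)) es}
    rfl isPiSystem_cylPast ?_ ?_ ?_ ?_ A hA
  · simp
  · rintro t ⟨es, hes, rfl⟩
    set t := cylSetL (1 - (es.length : ℤ)) es with ht_def
    have htm : MeasurableSet t := measurableSet_cylSetL _ _
    have htmF : MeasurableSet[pastAlgebra E] t :=
      MeasurableSpace.measurableSet_generateFrom ⟨es, hes, rfl⟩
    have hs : (∫ σ in t, gfun Λ eo σ ∂Λ)
        = ∫ σ in t, Set.indicator {σ : CodeSpace E | σ 1 = eo} (fun _ => (1 : ℝ)) σ ∂Λ :=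
      setIntegral_condExp (μ := Λ) (pastAlgebra_le (E := E)) (integrable_indE Λ eo) htmF
    have hL : ∫ σ in t, Set.indicator {σ : CodeSpace E | σ 1 = eo} (fun _ => (1 : ℝ)) σ ∂Λ
        = (Λ ({σ : CodeSpace E | σ 1 = eo} ∩ t)).toReal := by
      rw [integral_indicator_const (1 : ℝ) (measurableSet_cylE eo), measureReal_def,
        Measure.restrict_apply (measurableSet_cylE eo)]
      simp
    have hR : ∫ σ in t, gfun Λ eo σ ∂Λ
        = (∫⁻ σ in t, ENNReal.ofReal (gfun Λ eo σ) ∂Λ).toReal := by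
      rw [integral_eq_lintegral_of_nonneg_ae (ae_restrict_of_ae (gfun_nonneg Λ eo))
        ((measurable_gfun Λ eo).aestronglyMeasurable)]
    have hcomb : (Λ ({σ : CodeSpace E | σ 1 = eo} ∩ t)).toReal
        = (∫⁻ σ in t, ENNReal.ofReal (gfun Λ eo σ) ∂Λ).toReal := by
      rw [← hL, ← hs, hR]
    rw [Set.inter_comm]
    exact (ENNReal.toReal_eq_toReal_iff' (measure_ne_top Λ _) (hfin_set t htm)).mp hcomb
  · intro t htmF hC
    have htm : MeasurableSet t := pastAlgebra_le (E := E) _ htmF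
    have h1 : Λ (t ∩ {σ : CodeSpace E | σ 1 = eo}) + Λ (tᶜ ∩ {σ : CodeSpace E | σ 1 = eo})
        = Λ {σ : CodeSpace E | σ 1 = eo} := by
      rw [Set.inter_comm t, Set.inter_comm tᶜ, ← Set.diff_eq,
        measure_inter_add_diff _ htm]
    have h2 : (∫⁻ σ in t, ENNReal.ofReal (gfun Λ eo σ) ∂Λ)
        + (∫⁻ σ in tᶜ, ENNReal.ofReal (gfun Λ eo σ) ∂Λ)
        = Λ {σ : CodeSpace E | σ 1 = eo} := by
      rw [lintegral_add_compl _ htm]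
      exact lintegral_ofReal_gfun Λ eo
    have hfa : Λ (t ∩ {σ : CodeSpace E | σ 1 = eo}) ≠ ⊤ := measure_ne_top Λ _
    have ha : Λ (tᶜ ∩ {σ : CodeSpace E | σ 1 = eo})
        = Λ {σ : CodeSpace E | σ 1 = eo} - Λ (t ∩ {σ : CodeSpace E | σ 1 = eo}) :=
      ENNReal.eq_sub_of_add_eq hfa (by rw [add_comm]; exact h1)
    have hb : (∫⁻ σ in tᶜ, ENNReal.ofReal (gfun Λ eo σ) ∂Λ)
        = Λ {σ : CodeSpace E | σ 1 = eo} - (∫⁻ σ in t, ENNReal.ofReal (gfun Λ eo σ) ∂Λ) :=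
      ENNReal.eq_sub_of_add_eq (hfin_set t htm) (by rw [add_comm]; exact h2)
    rw [ha, hb, hC]
  · intro f hdisj hfmF hC
    have hfm : ∀ i, MeasurableSet (f i) := fun i => pastAlgebra_le (E := E) _ (hfmF i)
    rw [Set.iUnion_inter,
      measure_iUnion
        (fun i j hij => ((hdisj hij).mono Set.inter_subset_left Set.inter_subset_left))
        (fun i => (hfm i).inter (measurableSet_cylE eo)),
      lintegral_iUnion hfm hdisj]
    exact tsum_congr hC

lemma setLIntegral_cylE_eq (eo : Option E) {h : CodeSpace E → ℝ≥0∞}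
    (hh : Measurable[pastAlgebra E] h) :
    ∫⁻ σ in {σ : CodeSpace E | σ 1 = eo}, h σ ∂Λ
      = ∫⁻ σ, h σ * ENNReal.ofReal (gfun Λ eo σ) ∂Λ := by
  have hg : Measurable fun σ => ENNReal.ofReal (gfun Λ eo σ) :=
    ENNReal.measurable_ofReal.comp (measurable_gfun Λ eo)
  refine @Measurable.ennreal_induction (CodeSpace E) (pastAlgebra E)
    (fun h => ∫⁻ σ in {σ : CodeSpace E | σ 1 = eo}, h σ ∂Λ
      = ∫⁻ σ, h σ * ENNReal.ofReal (gfun Λ eo σ) ∂Λ) ?_ ?_ ?_ h hh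
  · intro c s hsF
    have hs : MeasurableSet s := pastAlgebra_le (E := E) _ hsF
    have hL : ∫⁻ σ in {σ : CodeSpace E | σ 1 = eo}, s.indicator (fun _ => c) σ ∂Λ
        = c * Λ (s ∩ {σ : CodeSpace E | σ 1 = eo}) := by
      rw [lintegral_indicator hs, setLIntegral_const,
        Measure.restrict_apply hs]
    have hmul : (fun σ => s.indicator (fun _ => c) σ * ENNReal.ofReal (gfun Λ eo σ))
        = s.indicator (fun σ => c * ENNReal.ofReal (gfun Λ eo σ)) := by
      funext σ
      by_cases hσ : σ ∈ s <;> simp [hσ]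
    rw [hL, hmul, lintegral_indicator hs, lintegral_const_mul c hg,
      ← meas_inter_eq_setLIntegral Λ eo hsF]
  · intro f1 f2 _ hf1 hf2 hP1 hP2
    have hf1' : Measurable f1 := hf1.mono (pastAlgebra_le (E := E)) le_rfl
    have hf2' : Measurable f2 := hf2.mono (pastAlgebra_le (E := E)) le_rfl
    simp only [Pi.add_apply, add_mul]
    rw [lintegral_add_left hf1', lintegral_add_left (show Measurable fun σ => f1 σ * ENNReal.ofReal (gfun Λ eo σ) from hf1'.mul hg), hP1, hP2]
  · intro f hfm hmono hP
    have hfm' : ∀ n, Measurable (f n) := fun n => (hfm n).mono (pastAlgebra_le (E := E)) le_rfl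
    have hmul : ∀ σ, (⨆ n, f n σ) * ENNReal.ofReal (gfun Λ eo σ)
        = ⨆ n, f n σ * ENNReal.ofReal (gfun Λ eo σ) := fun σ => by rw [ENNReal.iSup_mul]
    simp only [hmul]
    rw [lintegral_iSup hfm' hmono,
      lintegral_iSup (fun n => show Measurable fun σ => f n σ * ENNReal.ofReal (gfun Λ eo σ) from (hfm' n).mul hg)
        (fun i j hij σ => mul_le_mul_left (hmono hij σ) _)]
    exact iSup_congr hP

end Condexp

/-! ### Scalar inequalities -/

lemma phi_mul {b : ℝ} (hb0 : 0 ≤ b) :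
    (if b = 0 then (⊤ : ℝ≥0∞) else ENNReal.ofReal (-Real.log b)) * ENNReal.ofReal b
      = ENNReal.ofReal (Real.negMulLog b) := by
  rcases eq_or_lt_of_le hb0 with hb | hb
  · simp [← hb, Real.negMulLog_zero]
  rcases le_or_gt b 1 with hb1 | hb1
  · rw [if_neg hb.ne', ← ENNReal.ofReal_mul (neg_nonneg.mpr (Real.log_nonpos hb0 hb1))]
    congr 1
    rw [Real.negMulLog]
    ring
  · have hlog : 0 < Real.log b := Real.log_pos hb1
    have h1 : ENNReal.ofReal (-Real.log b) = 0 := by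
      rw [ENNReal.ofReal_eq_zero]; linarith
    have h2 : ENNReal.ofReal (Real.negMulLog b) = 0 := by
      rw [ENNReal.ofReal_eq_zero, Real.negMulLog]
      nlinarith
    rw [if_neg hb.ne', h1, h2, zero_mul]

lemma term_ineq {a b : ℝ} (ha0 : 0 ≤ a) (ha1 : a ≤ 1) (hb0 : 0 ≤ b) (hb1 : b ≤ 1) :
    ENNReal.ofReal (Real.negMulLog a) + ENNReal.ofReal a ≤
      (if b = 0 then (⊤ : ℝ≥0∞) else ENNReal.ofReal (-Real.log b)) * ENNReal.ofReal a
        + ENNReal.ofReal b := by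
  rcases eq_or_lt_of_le hb0 with hb | hb
  · rcases eq_or_lt_of_le ha0 with ha | ha
    · simp [← ha, ← hb, Real.negMulLog_zero]
    · rw [if_pos hb.symm]
      have h1 : (⊤ : ℝ≥0∞) * ENNReal.ofReal a = ⊤ := by
        rw [ENNReal.top_mul]
        rw [ne_eq, ENNReal.ofReal_eq_zero]
        linarith
      rw [h1]
      exact le_top.trans le_self_add
  · rw [if_neg hb.ne']
    have key : Real.negMulLog a + a ≤ a * (-Real.log b) + b := by
      rcases eq_or_lt_of_le ha0 with ha | ha
      · simp [← ha, Real.negMulLog_zero]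
        linarith
      · have hlog : Real.log (b / a) ≤ b / a - 1 := Real.log_le_sub_one_of_pos (by positivity)
        have hdiv : Real.log (b / a) = Real.log b - Real.log a := Real.log_div hb.ne' ha.ne'
        have hmul := mul_le_mul_of_nonneg_left hlog ha0
        have hba : a * (b / a - 1) = b - a := by field_simp
        rw [Real.negMulLog]
        nlinarith
    calc ENNReal.ofReal (Real.negMulLog a) + ENNReal.ofReal a
        = ENNReal.ofReal (Real.negMulLog a + a) :=
          (ENNReal.ofReal_add (Real.negMulLog_nonneg ha0 ha1) ha0).symm
      _ ≤ ENNReal.ofReal (a * (-Real.log b) + b) := ENNReal.ofReal_le_ofReal key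
      _ = ENNReal.ofReal (a * (-Real.log b)) + ENNReal.ofReal b :=
          ENNReal.ofReal_add (mul_nonneg ha0 (neg_nonneg.mpr (Real.log_nonpos hb0 hb1))) hb0
      _ = ENNReal.ofReal (-Real.log b) * ENNReal.ofReal a + ENNReal.ofReal b := by
          rw [mul_comm a, ENNReal.ofReal_mul (neg_nonneg.mpr (Real.log_nonpos hb0 hb1))]

lemma term_eq {a b : ℝ} (ha0 : 0 ≤ a) (ha1 : a ≤ 1) (hb0 : 0 ≤ b) (hb1 : b ≤ 1)
    (hfin : (if b = 0 then (⊤ : ℝ≥0∞) else ENNReal.ofReal (-Real.log b)) * ENNReal.ofReal a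
        + ENNReal.ofReal b ≠ ⊤)
    (heq : ENNReal.ofReal (Real.negMulLog a) + ENNReal.ofReal a =
      (if b = 0 then (⊤ : ℝ≥0∞) else ENNReal.ofReal (-Real.log b)) * ENNReal.ofReal a
        + ENNReal.ofReal b) : a = b := by
  rcases eq_or_lt_of_le hb0 with hb | hb
  · -- b = 0
    rcases eq_or_lt_of_le ha0 with ha | ha
    · rw [← ha, ← hb]
    · exfalso
      apply hfin
      rw [if_pos hb.symm]
      have h1 : (⊤ : ℝ≥0∞) * ENNReal.ofReal a = ⊤ := by
        rw [ENNReal.top_mul]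
        rw [ne_eq, ENNReal.ofReal_eq_zero]
        linarith
      rw [h1, top_add]
  · -- b > 0
    rw [if_neg hb.ne'] at heq
    have hlogb : 0 ≤ -Real.log b := neg_nonneg.mpr (Real.log_nonpos hb0 hb1)
    have hre : Real.negMulLog a + a = a * (-Real.log b) + b := by
      have h1 : ENNReal.ofReal (Real.negMulLog a + a)
          = ENNReal.ofReal (a * (-Real.log b) + b) := by
        rw [ENNReal.ofReal_add (Real.negMulLog_nonneg ha0 ha1) ha0,
          ENNReal.ofReal_add (mul_nonneg ha0 hlogb) hb0,
          mul_comm a (-Real.log b), ENNReal.ofReal_mul hlogb]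
        exact heq
      rw [ENNReal.ofReal_eq_ofReal_iff
        (add_nonneg (Real.negMulLog_nonneg ha0 ha1) ha0)
        (add_nonneg (mul_nonneg ha0 hlogb) hb0)] at h1
      exact h1
    rcases eq_or_lt_of_le ha0 with ha | ha
    · exfalso
      rw [← ha] at hre
      simp [Real.negMulLog_zero] at hre
      linarith
    · by_contra hab
      have hlog : Real.log (b / a) < b / a - 1 :=
        Real.log_lt_sub_one_of_pos (by positivity) (by
          intro h1
          apply hab
          field_simp at h1
          linarith)
      have hdiv : Real.log (b / a) = Real.log b - Real.log a := Real.log_div hb.ne' ha.ne'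
      have hmul := mul_lt_mul_of_pos_left hlog ha
      have hba : a * (b / a - 1) = b - a := by field_simp
      rw [Real.negMulLog] at hre
      nlinarith

lemma tsum_option_ennreal {E : Type*} [Countable E] (f : Option E → ℝ≥0∞) :
    ∑' o : Option E, f o = f none + ∑' e : E, f (some e) := by
  have hsplit : ∀ o : Option E, f o = ({none} : Set (Option E)).indicator f o
      + ({none}ᶜ : Set (Option E)).indicator f o := by
    intro o
    by_cases h : o = none <;> simp [h]
  have h1 : ∑' o : Option E, f o = (∑' o : Option E, ({none} : Set (Option E)).indicator f o)
      + ∑' o : Option E, ({none}ᶜ : Set (Option E)).indicator f o := by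
    rw [← ENNReal.tsum_add]
    exact tsum_congr hsplit
  have h2 : ∑' o : Option E, ({none} : Set (Option E)).indicator f o = f none := by
    rw [tsum_eq_single none]
    · simp
    · intro b hb
      simp [Set.indicator_of_notMem, hb]
  have h3 : ∑' e : E, f (some e) = ∑' o : Option E, ({none}ᶜ : Set (Option E)).indicator f o := by
    have h4 : ∀ e : E, f (some e) = ({none}ᶜ : Set (Option E)).indicator f (some e) := by
      intro e; simp
    rw [tsum_congr h4]
    refine (Option.some_injective E).tsum_eq ?_
    intro o ho
    rcases o with - | e
    · simp at ho
    · exact ⟨e, rfl⟩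
  rw [h1, h2, h3]

lemma ereal_coe_sub_eq_zero_iff {x y : ℝ≥0∞} (hx : x ≠ ⊤) (hy : y ≠ ⊤) :
    ((x : EReal) - (y : EReal) = 0) ↔ x = y := by
  lift x to ℝ≥0 using hx
  lift y to ℝ≥0 using hy
  rw [EReal.coe_nnreal_eq_coe_real, EReal.coe_nnreal_eq_coe_real, ← EReal.coe_sub,
    EReal.coe_eq_zero, sub_eq_zero]
  exact_mod_cast Iff.rfl

lemma ereal_coe_sub_nonpos {x y : ℝ≥0∞} (hx : x ≠ ⊤) (hy : y ≠ ⊤) (hxy : x ≤ y) :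
    ((x : EReal) - (y : EReal)) ≤ 0 := by
  lift x to ℝ≥0 using hx
  lift y to ℝ≥0 using hy
  rw [EReal.coe_nnreal_eq_coe_real, EReal.coe_nnreal_eq_coe_real, ← EReal.coe_sub]
  have h : (x : ℝ) - (y : ℝ) ≤ 0 := by
    have : (x : ℝ) ≤ (y : ℝ) := by exact_mod_cast hxy
    linarith
  exact_mod_cast h

lemma ereal_sub_top' (x : EReal) : x - (⊤ : EReal) = ⊥ := by
  rw [sub_eq_add_neg, EReal.neg_top, EReal.add_bot]

/-! ### Main computations -/

section Main

variable {K : Type*} [MetricSpace K] [CompleteSpace K] [MeasurableSpace K] [BorelSpace K]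
  {N E : Type*} [Countable N] [Countable E]

lemma sum_ofReal_p_eq_one (M : MarkovSystem K N E) (x : K) :
    ∑' e : E, ENNReal.ofReal (M.p e x) = 1 := by
  obtain ⟨j, hj⟩ : ∃ j, x ∈ M.Kset j := by
    have h := M.Kset_cover
    rw [Set.eq_univ_iff_forall] at h
    exact Set.mem_iUnion.mp (h x)
  have hzero : ∀ e : E, M.i e ≠ j → M.p e x = 0 := by
    intro e he
    refine M.p_zero_outside e x (fun hx => ?_)
    exact Set.disjoint_left.mp (M.Kset_disjoint he) hx hj
  have hsub : Function.support (fun e : E => ENNReal.ofReal (M.p e x))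
      ⊆ {e : E | M.i e = j} := by
    intro e he
    by_contra hij
    simp only [Function.mem_support, ne_eq, ENNReal.ofReal_eq_zero, not_le] at he
    have := hzero e hij
    rw [this] at he
    exact (lt_irrefl 0 he)
  have h1 : ∑' e : E, ENNReal.ofReal (M.p e x)
      = ∑' e : {e : E | M.i e = j}, ENNReal.ofReal (M.p e.val x) :=
    (tsum_subtype_eq_of_support_subset hsub).symm
  have hsummable : Summable (fun e : {e : E // M.i e = j} => M.p e.val x) := by
    by_contra hs
    have h0 := tsum_eq_zero_of_not_summable hs
    rw [M.p_tsum_one j x hj] at h0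
    norm_num at h0
  have h2 : ∑' e : {e : E // M.i e = j}, ENNReal.ofReal (M.p e.val x) = 1 := by
    rw [← ENNReal.ofReal_tsum_of_nonneg (fun e => M.p_nonneg _ x) hsummable,
      M.p_tsum_one j x hj, ENNReal.ofReal_one]
  rw [h1]
  exact h2

/-- The `𝓕`-measurable version of `σ ↦ -log p_{σ_1}(F σ)` at a fixed symbol `e`. -/
def phiF (M : MarkovSystem K N E) (j0 : N) (xp : N → K) (e : E) : CodeSpace E → ℝ≥0∞ :=
  fun σ => if M.p e (Ftil M j0 xp σ) = 0 then ⊤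
    else ENNReal.ofReal (-Real.log (M.p e (Ftil M j0 xp σ)))

lemma measurable_phiF_past (M : MarkovSystem K N E) (j0 : N) (xp : N → K) (e : E) :
    Measurable[pastAlgebra E] (phiF M j0 xp e) := by
  have hF := measurable_Ftil M j0 xp
  have hp0 : MeasurableSet {x : K | M.p e x = 0} := M.p_measurable e (measurableSet_singleton 0)
  have hK : Measurable fun x : K => (if M.p e x = 0 then (⊤ : ℝ≥0∞)
      else ENNReal.ofReal (-Real.log (M.p e x))) := by
    refine Measurable.ite hp0 measurable_const ?_
    exact ENNReal.measurable_ofReal.comp ((Real.measurable_log.comp (M.p_measurable e)).neg)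
  exact hK.comp hF

lemma measurable_phiF (M : MarkovSystem K N E) (j0 : N) (xp : N → K) (e : E) :
    Measurable (phiF M j0 xp e) :=
  (measurable_phiF_past M j0 xp e).mono (pastAlgebra_le (E := E)) le_rfl

lemma entropyS_eq (M : MarkovSystem K N E) (j0 : N) (xp : N → K)
    (Λ : Measure (CodeSpace E)) [IsProbabilityMeasure Λ]
    (hnone : Λ {σ : CodeSpace E | σ 1 = none} = 0) :
    entropyS Λ = ∑' e : E, ∫⁻ σ, ENNReal.ofReal (Real.negMulLog (gfun Λ (some e) σ)) ∂Λ := by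
  have hnone_ae : (Set.indicator {σ : CodeSpace E | σ 1 = none} (fun _ => (1 : ℝ)))
      =ᵐ[Λ] (0 : CodeSpace E → ℝ) := by
    have h0 : ∀ᵐ σ ∂Λ, σ ∉ {σ : CodeSpace E | σ 1 = none} := by
      rw [ae_iff]
      have hset : {σ : CodeSpace E | ¬ σ ∉ {σ : CodeSpace E | σ 1 = none}}
          = {σ : CodeSpace E | σ 1 = none} := by
        ext σ; simp only [Set.mem_setOf_eq, not_not]
      rw [hset]
      exact hnone
    filter_upwards [h0] with σ hσ
    rw [Pi.zero_apply, Set.indicator_of_notMem (s := {σ : CodeSpace E | σ 1 = none}) hσ]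
  have hcond0 : gfun Λ none =ᵐ[Λ] (0 : CodeSpace E → ℝ) := by
    have h := condExp_congr_ae (m := pastAlgebra E) hnone_ae
    rwa [condExp_zero] at h
  have hterm0 : ∫⁻ σ, ENNReal.ofReal (Real.negMulLog (gfun Λ none σ)) ∂Λ = 0 := by
    have h : (fun σ => ENNReal.ofReal (Real.negMulLog (gfun Λ none σ)))
        =ᵐ[Λ] (0 : CodeSpace E → ℝ≥0∞) := by
      filter_upwards [hcond0] with σ hσ
      simp only [Pi.zero_apply] at hσ ⊢
      simp [hσ, Real.negMulLog_zero]
    rw [lintegral_congr_ae h]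
    simp
  have hrepr : entropyS Λ = ∑' eo : Option E,
      ∫⁻ σ, ENNReal.ofReal (Real.negMulLog (gfun Λ eo σ)) ∂Λ := rfl
  rw [hrepr, tsum_option_ennreal
    (fun eo => ∫⁻ σ, ENNReal.ofReal (Real.negMulLog (gfun Λ eo σ)) ∂Λ), hterm0, zero_add]

lemma ae_codeDomain (M : MarkovSystem K N E) (j0 : N) (xp : N → K)
    (Λ : Measure (CodeSpace E)) [IsProbabilityMeasure Λ]
    (hD : Λ (M.codeDomain j0 xp) = 1) : ∀ᵐ σ ∂Λ, σ ∈ M.codeDomain j0 xp := by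
  rw [ae_iff]
  have hset : {σ : CodeSpace E | ¬ σ ∈ M.codeDomain j0 xp} = (M.codeDomain j0 xp)ᶜ := rfl
  rw [hset]
  exact (prob_compl_eq_zero_iff (measurableSet_codeDomain M j0 xp)).mpr hD

lemma none_null (M : MarkovSystem K N E) (j0 : N) (xp : N → K)
    (Λ : Measure (CodeSpace E)) [IsProbabilityMeasure Λ]
    (hD : Λ (M.codeDomain j0 xp) = 1) : Λ {σ : CodeSpace E | σ 1 = none} = 0 := by
  have hsub : {σ : CodeSpace E | σ 1 = none} ⊆ (M.codeDomain j0 xp)ᶜ := by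
    intro σ hσ hD'
    obtain ⟨e, e', h1e, h2e, h3e⟩ := hD'.1 1
    rw [hσ] at h1e
    cases h1e
  exact measure_mono_null hsub
    ((prob_compl_eq_zero_iff (measurableSet_codeDomain M j0 xp)).mpr hD)

lemma lintegral_negEnergy_eq (M : MarkovSystem K N E) (j0 : N) (xp : N → K)
    (Λ : Measure (CodeSpace E)) [IsProbabilityMeasure Λ]
    (hD : Λ (M.codeDomain j0 xp) = 1) :
    ∫⁻ σ, M.negEnergy j0 xp σ ∂Λ
      = ∑' e : E, ∫⁻ σ, phiF M j0 xp e σ * ENNReal.ofReal (gfun Λ (some e) σ) ∂Λ := by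
  have hae := ae_codeDomain M j0 xp Λ hD
  have h1 : M.negEnergy j0 xp =ᵐ[Λ] fun σ => ∑' e : E,
      ({σ' : CodeSpace E | σ' 1 = some e}).indicator (phiF M j0 xp e) σ := by
    filter_upwards [hae] with σ hσ
    obtain ⟨e, e', h1e, h2e, h3e⟩ := hσ.1 1
    rw [tsum_eq_single e ?_]
    · rw [Set.indicator_of_mem (show σ ∈ {σ' : CodeSpace E | σ' 1 = some e} from h1e)]
      show M.negEnergy j0 xp σ = phiF M j0 xp e σ
      rw [MarkovSystem.negEnergy, if_pos hσ, h1e, code_eq_Ftil M j0 xp hσ]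
      rfl
    · intro e'' he''
      refine Set.indicator_of_notMem (fun hmem => ?_) _
      rw [Set.mem_setOf_eq, h1e] at hmem
      exact he'' ((Option.some_injective E hmem).symm)
  rw [lintegral_congr_ae h1, lintegral_tsum (fun e =>
    ((measurable_phiF M j0 xp e).indicator (measurableSet_cylE (some e))).aemeasurable)]
  refine tsum_congr fun e => ?_
  rw [lintegral_indicator (measurableSet_cylE (some e))]
  exact setLIntegral_cylE_eq Λ (some e) (measurable_phiF_past M j0 xp e)

lemma lintegral_negEnergy_top (M : MarkovSystem K N E) (j0 : N) (xp : N → K)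
    (Λ : Measure (CodeSpace E)) [IsProbabilityMeasure Λ]
    (hD : Λ (M.codeDomain j0 xp) ≠ 1) :
    ∫⁻ σ, M.negEnergy j0 xp σ ∂Λ = ⊤ := by
  have hc : Λ (M.codeDomain j0 xp)ᶜ ≠ 0 := by
    intro h0
    exact hD ((prob_compl_eq_zero_iff (measurableSet_codeDomain M j0 xp)).mp h0)
  have hle : ∫⁻ σ in (M.codeDomain j0 xp)ᶜ, M.negEnergy j0 xp σ ∂Λ
      ≤ ∫⁻ σ, M.negEnergy j0 xp σ ∂Λ := setLIntegral_le_lintegral _ _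
  have heq : ∫⁻ σ in (M.codeDomain j0 xp)ᶜ, M.negEnergy j0 xp σ ∂Λ = ⊤ := by
    have hcong : ∀ σ ∈ (M.codeDomain j0 xp)ᶜ, M.negEnergy j0 xp σ = (⊤ : ℝ≥0∞) := by
      intro σ hσ
      rw [MarkovSystem.negEnergy, if_neg hσ]
    rw [setLIntegral_congr_fun (measurableSet_codeDomain M j0 xp).compl
      hcong, setLIntegral_const, ENNReal.top_mul hc]
  exact le_antisymm le_top (heq ▸ hle)

lemma main_ineq (M : MarkovSystem K N E) (j0 : N) (xp : N → K)
    (Λ : Measure (CodeSpace E)) [IsProbabilityMeasure Λ]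
    (hD : Λ (M.codeDomain j0 xp) = 1) :
    entropyS Λ + 1 ≤ (∫⁻ σ, M.negEnergy j0 xp σ ∂Λ) + 1 ∧
      (entropyS Λ = ∫⁻ σ, M.negEnergy j0 xp σ ∂Λ →
        (∫⁻ σ, M.negEnergy j0 xp σ ∂Λ) ≠ ⊤ → entropyS Λ ≠ ⊤ →
        ∀ e : E,
          (Λ[Set.indicator {σ : CodeSpace E | σ 1 = some e} (fun _ => (1 : ℝ)) | pastAlgebra E])
            =ᵐ[Λ] fun σ => M.p e (M.code j0 xp σ)) := by
  have hFtil : Measurable (Ftil M j0 xp) :=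
    (measurable_Ftil M j0 xp).mono (pastAlgebra_le (E := E)) le_rfl
  have hnm : Measurable Real.negMulLog := by
    have h : Real.negMulLog = fun x : ℝ => -x * Real.log x := rfl
    rw [h]
    exact measurable_id.neg.mul Real.measurable_log
  set g : E → CodeSpace E → ℝ := fun e => gfun Λ (some e) with hg_def
  have hgm : ∀ e, Measurable (g e) := fun e => measurable_gfun Λ (some e)
  have hGm : ∀ e : E, Measurable fun σ => ENNReal.ofReal (g e σ) :=
    fun e => ENNReal.measurable_ofReal.comp (hgm e)
  have hphim : ∀ e, Measurable (phiF M j0 xp e) := measurable_phiF M j0 xp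
  set A : E → CodeSpace E → ℝ≥0∞ :=
    fun e σ => ENNReal.ofReal (Real.negMulLog (g e σ)) + ENNReal.ofReal (g e σ) with hA_def
  set B : E → CodeSpace E → ℝ≥0∞ :=
    fun e σ => phiF M j0 xp e σ * ENNReal.ofReal (g e σ)
      + ENNReal.ofReal (M.p e (Ftil M j0 xp σ)) with hB_def
  have hAm : ∀ e, Measurable (A e) := fun e =>
    (ENNReal.measurable_ofReal.comp (hnm.comp (hgm e))).add (hGm e)
  have hBm : ∀ e, Measurable (B e) := fun e =>
    ((hphim e).mul (hGm e)).add
      (ENNReal.measurable_ofReal.comp ((M.p_measurable e).comp hFtil))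
  have hterm : ∀ᵐ σ ∂Λ, ∀ e : E, A e σ ≤ B e σ := by
    rw [ae_all_iff]
    intro e
    filter_upwards [gfun_nonneg Λ (some e), gfun_le_one Λ (some e)] with σ h0 h1
    exact term_ineq h0 h1 (M.p_nonneg e _) (M.p_le_one e _)
  have hsumA : ∫⁻ σ, ∑' e : E, A e σ ∂Λ = entropyS Λ + 1 := by
    rw [lintegral_tsum (fun e => (hAm e).aemeasurable)]
    have h1 : ∀ e : E, ∫⁻ σ, A e σ ∂Λ
        = (∫⁻ σ, ENNReal.ofReal (Real.negMulLog (g e σ)) ∂Λ)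
          + Λ {σ : CodeSpace E | σ 1 = some e} := by
      intro e
      simp only [hA_def]
      have hf1 : Measurable fun σ => ENNReal.ofReal (Real.negMulLog (g e σ)) :=
        ENNReal.measurable_ofReal.comp (hnm.comp (hgm e))
      rw [lintegral_add_left hf1]
      rw [lintegral_ofReal_gfun Λ (some e)]
    rw [tsum_congr h1, ENNReal.tsum_add]
    congr 1
    · exact (entropyS_eq M j0 xp Λ (none_null M j0 xp Λ hD)).symm
    · have hdis : Pairwise (Function.onFun Disjoint
          fun e : E => {σ : CodeSpace E | σ 1 = some e}) := by
        intro e1 e2 hne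
        refine Set.disjoint_left.mpr fun σ hσ1 hσ2 => ?_
        rw [Set.mem_setOf_eq] at hσ1 hσ2
        rw [hσ1] at hσ2
        exact hne (Option.some_injective E hσ2)
      rw [← measure_iUnion hdis (fun e => measurableSet_cylE (some e))]
      have hsub : M.codeDomain j0 xp ⊆ ⋃ e : E, {σ : CodeSpace E | σ 1 = some e} := by
        intro σ hσ
        obtain ⟨e, e', h1e, h2e, h3e⟩ := hσ.1 1
        exact Set.mem_iUnion.mpr ⟨e, h1e⟩
      refine le_antisymm prob_le_one ?_
      calc (1 : ℝ≥0∞) = Λ (M.codeDomain j0 xp) := hD.symm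
        _ ≤ _ := measure_mono hsub
  have hsumB : ∫⁻ σ, ∑' e : E, B e σ ∂Λ = (∫⁻ σ, M.negEnergy j0 xp σ ∂Λ) + 1 := by
    have hsplit : ∀ σ, ∑' e : E, B e σ
        = (∑' e : E, phiF M j0 xp e σ * ENNReal.ofReal (g e σ))
          + ∑' e : E, ENNReal.ofReal (M.p e (Ftil M j0 xp σ)) := fun σ => ENNReal.tsum_add
    simp only [hsplit]
    rw [lintegral_add_left (show Measurable fun σ => ∑' e : E, phiF M j0 xp e σ * ENNReal.ofReal (g e σ) from Measurable.ennreal_tsum (fun e => (hphim e).mul (hGm e)))]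
    congr 1
    · rw [lintegral_tsum (fun e => (show Measurable fun σ => phiF M j0 xp e σ * ENNReal.ofReal (g e σ) from (hphim e).mul (hGm e)).aemeasurable)]
      exact (lintegral_negEnergy_eq M j0 xp Λ hD).symm
    · have hone : ∀ σ : CodeSpace E,
          ∑' e : E, ENNReal.ofReal (M.p e (Ftil M j0 xp σ)) = 1 :=
        fun σ => sum_ofReal_p_eq_one M (Ftil M j0 xp σ)
      simp only [hone]
      simp
  constructor
  · calc entropyS Λ + 1 = ∫⁻ σ, ∑' e : E, A e σ ∂Λ := hsumA.symm
      _ ≤ ∫⁻ σ, ∑' e : E, B e σ ∂Λ :=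
        lintegral_mono_ae (hterm.mono fun σ h => ENNReal.tsum_le_tsum h)
      _ = _ := hsumB
  · intro hTB hBfin hTfin e
    have hAfin : ∫⁻ σ, ∑' e : E, A e σ ∂Λ ≠ ⊤ := by
      rw [hsumA]
      exact ENNReal.add_ne_top.mpr ⟨hTfin, ENNReal.one_ne_top⟩
    have hBfin' : ∫⁻ σ, ∑' e : E, B e σ ∂Λ ≠ ⊤ := by
      rw [hsumB]
      exact ENNReal.add_ne_top.mpr ⟨hBfin, ENNReal.one_ne_top⟩
    have hint_eq : ∫⁻ σ, ∑' e : E, B e σ ∂Λ = ∫⁻ σ, ∑' e : E, A e σ ∂Λ := by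
      rw [hsumA, hsumB, hTB]
    have hle_ae : (fun σ => ∑' e : E, A e σ) ≤ᵐ[Λ] fun σ => ∑' e : E, B e σ :=
      hterm.mono fun σ h => ENNReal.tsum_le_tsum h
    have hmeasA : Measurable fun σ => ∑' e : E, A e σ := Measurable.ennreal_tsum hAm
    have hmeasB : Measurable fun σ => ∑' e : E, B e σ := Measurable.ennreal_tsum hBm
    have hsub0 : ∫⁻ σ, ((∑' e : E, B e σ) - (∑' e : E, A e σ)) ∂Λ = 0 := by
      rw [lintegral_sub hmeasA hAfin hle_ae, hint_eq, tsub_self]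
    have hae0 : ∀ᵐ σ ∂Λ, (∑' e : E, B e σ) - (∑' e : E, A e σ) = 0 := by
      have h := (lintegral_eq_zero_iff (hmeasB.sub hmeasA)).mp hsub0
      filter_upwards [h] with σ hσ
      exact hσ
    have hBlt : ∀ᵐ σ ∂Λ, (∑' e : E, B e σ) < ⊤ := ae_lt_top hmeasB hBfin'
    have key : ∀ᵐ σ ∂Λ, ∀ e : E, g e σ = M.p e (Ftil M j0 xp σ) := by
      filter_upwards [hterm, hae0, hBlt, ae_all_iff.mpr
        (fun e : E => (gfun_nonneg Λ (some e)).and (gfun_le_one Λ (some e)))]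
        with σ hterm' h0 hlt h01
      have hBA : (∑' e : E, B e σ) ≤ (∑' e : E, A e σ) := tsub_eq_zero_iff_le.mp h0
      have hsum_eq : (∑' e : E, A e σ) = (∑' e : E, B e σ) :=
        le_antisymm (ENNReal.tsum_le_tsum hterm') hBA
      have hAfin' : (∑' e : E, A e σ) ≠ ⊤ := by
        rw [hsum_eq]
        exact hlt.ne
      intro e
      have hterm_eq : A e σ = B e σ := by
        by_contra hne
        have hlt' : A e σ < B e σ := lt_of_le_of_ne (hterm' e) hne
        exact absurd hsum_eq (ne_of_lt (ENNReal.tsum_lt_tsum hAfin' hterm' hlt'))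
      have hBefin : B e σ ≠ ⊤ := ne_top_of_le_ne_top hlt.ne (ENNReal.le_tsum e)
      exact term_eq (h01 e).1 (h01 e).2 (M.p_nonneg e _) (M.p_le_one e _) hBefin hterm_eq
    have haeD := ae_codeDomain M j0 xp Λ hD
    filter_upwards [key, haeD] with σ hk hσD
    rw [code_eq_Ftil M j0 xp hσD]
    exact hk e

lemma entropy_eq_energy_of_equilibrium (M : MarkovSystem K N E) (j0 : N) (xp : N → K)
    (Λ : Measure (CodeSpace E)) (hE : M.IsEquilibrium j0 xp Λ) :
    entropyS Λ = ∫⁻ σ, M.negEnergy j0 xp σ ∂Λ := by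
  obtain ⟨hprob, hshift, hD, hcond⟩ := hE
  haveI := hprob
  have hcode : ∀ e : E, gfun Λ (some e) =ᵐ[Λ] fun σ => M.p e (Ftil M j0 xp σ) := by
    intro e
    filter_upwards [hcond e, ae_codeDomain M j0 xp Λ hD] with σ h2 h3
    rw [← code_eq_Ftil M j0 xp h3]
    exact h2
  rw [entropyS_eq M j0 xp Λ (none_null M j0 xp Λ hD), lintegral_negEnergy_eq M j0 xp Λ hD]
  refine tsum_congr fun e => ?_
  have hcong : (fun σ => ENNReal.ofReal (Real.negMulLog (gfun Λ (some e) σ)))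
      =ᵐ[Λ] fun σ => phiF M j0 xp e σ * ENNReal.ofReal (gfun Λ (some e) σ) := by
    filter_upwards [hcode e] with σ h1
    rw [h1, ← phi_mul (M.p_nonneg e _)]
    rfl
  exact lintegral_congr_ae hcong

lemma freeEnergy_eq_zero_of_equilibrium (M : MarkovSystem K N E) (j0 : N) (xp : N → K)
    (Λ : Measure (CodeSpace E)) (hE : M.IsEquilibrium j0 xp Λ) (hfin : entropyS Λ ≠ ⊤) :
    M.freeEnergy j0 xp Λ = 0 := by
  have hTB := entropy_eq_energy_of_equilibrium M j0 xp Λ hE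
  show (entropyS Λ : EReal) - ((∫⁻ σ, M.negEnergy j0 xp σ ∂Λ : ℝ≥0∞) : EReal) = 0
  rw [← hTB]
  exact (ereal_coe_sub_eq_zero_iff hfin hfin).mpr rfl

lemma freeEnergy_nonpos (M : MarkovSystem K N E) (j0 : N) (xp : N → K)
    (Λ : Measure (CodeSpace E)) (hprob : IsProbabilityMeasure Λ) (hfin : entropyS Λ ≠ ⊤) :
    M.freeEnergy j0 xp Λ ≤ 0 := by
  haveI := hprob
  show (entropyS Λ : EReal) - ((∫⁻ σ, M.negEnergy j0 xp σ ∂Λ : ℝ≥0∞) : EReal) ≤ 0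
  by_cases hD : Λ (M.codeDomain j0 xp) = 1
  · by_cases hB : (∫⁻ σ, M.negEnergy j0 xp σ ∂Λ) = ⊤
    · rw [hB, EReal.coe_ennreal_top, ereal_sub_top']
      exact bot_le
    · have h1 := (main_ineq M j0 xp Λ hD).1
      have hle : entropyS Λ ≤ ∫⁻ σ, M.negEnergy j0 xp σ ∂Λ := by
        rwa [ENNReal.add_le_add_iff_right ENNReal.one_ne_top] at h1
      exact ereal_coe_sub_nonpos hfin hB hle
  · rw [lintegral_negEnergy_top M j0 xp Λ hD, EReal.coe_ennreal_top, ereal_sub_top']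
    exact bot_le

lemma isEquilibrium_of_freeEnergy_zero (M : MarkovSystem K N E) (j0 : N) (xp : N → K)
    (Λ : Measure (CodeSpace E)) (hprob : IsProbabilityMeasure Λ)
    (hshift : Measure.map (shiftMap E) Λ = Λ) (hfin : entropyS Λ ≠ ⊤)
    (hzero : M.freeEnergy j0 xp Λ = 0) : M.IsEquilibrium j0 xp Λ := by
  haveI := hprob
  have hzero' : (entropyS Λ : EReal) - ((∫⁻ σ, M.negEnergy j0 xp σ ∂Λ : ℝ≥0∞) : EReal) = 0 :=
    hzero
  have hB : (∫⁻ σ, M.negEnergy j0 xp σ ∂Λ) ≠ ⊤ := by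
    intro hB
    rw [hB, EReal.coe_ennreal_top, ereal_sub_top'] at hzero'
    simp at hzero'
  have hD : Λ (M.codeDomain j0 xp) = 1 := by
    by_contra hD
    exact hB (lintegral_negEnergy_top M j0 xp Λ hD)
  have hTB : entropyS Λ = ∫⁻ σ, M.negEnergy j0 xp σ ∂Λ :=
    (ereal_coe_sub_eq_zero_iff hfin hB).mp hzero'
  exact ⟨hprob, hshift, hD, (main_ineq M j0 xp Λ hD).2 hTB hB hfin⟩

end Main

end MSAux

end Aux


variable {K : Type*} [MetricSpace K] [CompleteSpace K] [MeasurableSpace K] [BorelSpace K]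
  {N E : Type*} [Countable N] [Countable E]

/-- If `{M ∈ E(M) : h_S(M) < ∞}` is nonempty, then it equals `E(u)`. -/
theorem equilibrium_finite_entropy_eq_equilibriumForU
    (M : MarkovSystem K N E) (j0 : N) (xp : N → K) (hxp : ∀ j, xp j ∈ M.Kset j)
    (hne : ∃ Λ : Measure (CodeSpace E), M.IsEquilibrium j0 xp Λ ∧ entropyS Λ ≠ ⊤) :
    {Λ : Measure (CodeSpace E) | M.IsEquilibrium j0 xp Λ ∧ entropyS Λ ≠ ⊤} =
      {Λ : Measure (CodeSpace E) | M.IsEquilibriumForU j0 xp Λ} := by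
  classical
  obtain ⟨Λs, hEs, hfins⟩ := hne
  have hsup : sSup {r : EReal | ∃ Λ : Measure (CodeSpace E),
      IsProbabilityMeasure Λ ∧ Measure.map (shiftMap E) Λ = Λ ∧ entropyS Λ ≠ ⊤ ∧
        r = M.freeEnergy j0 xp Λ} = 0 := by
    apply le_antisymm
    · apply sSup_le
      rintro r ⟨Λ, hp, hs, hf, rfl⟩
      exact MSAux.freeEnergy_nonpos M j0 xp Λ hp hf
    · exact le_sSup ⟨Λs, hEs.1, hEs.2.1, hfins,
        (MSAux.freeEnergy_eq_zero_of_equilibrium M j0 xp Λs hEs hfins).symm⟩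
  ext Λ
  simp only [Set.mem_setOf_eq]
  constructor
  · rintro ⟨hE, hfin⟩
    refine ⟨hE.1, hE.2.1, hfin, ?_⟩
    rw [hsup, MSAux.freeEnergy_eq_zero_of_equilibrium M j0 xp Λ hE hfin]
  · rintro ⟨hp, hs, hfin, heq⟩
    rw [hsup] at heq
    exact ⟨MSAux.isEquilibrium_of_freeEnergy_zero M j0 xp Λ hp hs hfin heq, hfin⟩
end
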